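/- arXiv:2409.16886 — 7 statements merged into one kernel-verified Lean document; each statement's English description precedes it below -/
import Mathlib

section
/- Define S(α) = (1/2)(arcsin(α) + α√(1−α²)) for α ∈ [0,1] and for r ∈ [0,1] define α(r) = (1 − √(1−r²))^{1/2}. Then the function δ(r) := √2·S(α(r)) − r satisfies δ(0) = 0 and δ(r) > 0 for all r ∈ (0,1]. -/
noncomputable def S (α : ℝ) : ℝ := (Real.arcsin α + α * Real.sqrt (1 - α ^ 2)) / 2

noncomputable def alphaOf (r : ℝ) : ℝ := Real.sqrt (1 - Real.sqrt (1 - r ^ 2))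

noncomputable def deltaFun (r : ℝ) : ℝ := Real.sqrt 2 * S (alphaOf r) - r

noncomputable def fAux (x : ℝ) : ℝ :=
  Real.sqrt 2 * (Real.arcsin x + x * Real.sqrt (1 - x ^ 2)) - 2 * (x * Real.sqrt (2 - x ^ 2))

lemma fAux_hasDeriv {x : ℝ} (hx : x ∈ Set.Ioo (0 : ℝ) 1) :
    HasDerivAt fAux
      (Real.sqrt 2 * (1 / Real.sqrt (1 - x ^ 2) +
        (1 * Real.sqrt (1 - x ^ 2) + x * (1 / (2 * Real.sqrt (1 - x ^ 2)) * (-(2 * x))))) -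
       2 * (1 * Real.sqrt (2 - x ^ 2) + x * (1 / (2 * Real.sqrt (2 - x ^ 2)) * (-(2 * x))))) x := by
  obtain ⟨hx0, hx1⟩ := hx
  have h1pos : (0 : ℝ) < 1 - x ^ 2 := by nlinarith
  have h2pos : (0 : ℝ) < 2 - x ^ 2 := by nlinarith
  have hd1 : HasDerivAt (fun x : ℝ => 1 - x ^ 2) (-(2 * x)) x := by
    simpa using (hasDerivAt_pow 2 x).const_sub 1
  have hd2 : HasDerivAt (fun x : ℝ => 2 - x ^ 2) (-(2 * x)) x := by
    simpa using (hasDerivAt_pow 2 x).const_sub 2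
  have hs1 : HasDerivAt (fun x : ℝ => Real.sqrt (1 - x ^ 2))
      (1 / (2 * Real.sqrt (1 - x ^ 2)) * (-(2 * x))) x :=
    (Real.hasDerivAt_sqrt h1pos.ne').comp x hd1
  have hs2 : HasDerivAt (fun x : ℝ => Real.sqrt (2 - x ^ 2))
      (1 / (2 * Real.sqrt (2 - x ^ 2)) * (-(2 * x))) x :=
    (Real.hasDerivAt_sqrt h2pos.ne').comp x hd2
  have harcsin : HasDerivAt Real.arcsin (1 / Real.sqrt (1 - x ^ 2)) x :=
    Real.hasDerivAt_arcsin (by linarith) (by linarith)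
  exact ((harcsin.add ((hasDerivAt_id x).mul hs1)).const_mul (Real.sqrt 2)).sub
    (((hasDerivAt_id x).mul hs2).const_mul 2)

lemma fAux_strictMono : StrictMonoOn fAux (Set.Icc 0 1) := by
  have hcont : ContinuousOn fAux (Set.Icc 0 1) := by
    apply ContinuousOn.sub
    · exact (Real.continuous_arcsin.add (continuous_id.mul
        ((continuous_const.sub (continuous_pow 2)).sqrt))).comp continuous_id
        |>.const_smul (Real.sqrt 2) |>.continuousOn
    · fun_prop
  apply strictMonoOn_of_deriv_pos (convex_Icc 0 1) hcont
  intro x hx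
  rw [interior_Icc] at hx
  rw [(fAux_hasDeriv hx).deriv]
  obtain ⟨hx0, hx1⟩ := hx
  have h1pos : (0 : ℝ) < 1 - x ^ 2 := by nlinarith
  have h2pos : (0 : ℝ) < 2 - x ^ 2 := by nlinarith
  set a := Real.sqrt (1 - x ^ 2) with ha
  set b := Real.sqrt (2 - x ^ 2) with hb
  have hapos : 0 < a := Real.sqrt_pos.mpr h1pos
  have hbpos : 0 < b := Real.sqrt_pos.mpr h2pos
  have ha2 : a ^ 2 = 1 - x ^ 2 := Real.sq_sqrt h1pos.le
  have hb2 : b ^ 2 = 2 - x ^ 2 := Real.sq_sqrt h2pos.le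
  have hs2 : Real.sqrt 2 ^ 2 = 2 := Real.sq_sqrt (by norm_num)
  have hs2pos : 0 < Real.sqrt 2 := Real.sqrt_pos.mpr (by norm_num)
  -- key inequality: sqrt 2 * b > 2 * a
  have hkey : 2 * a < Real.sqrt 2 * b := by
    nlinarith [sq_nonneg (Real.sqrt 2 * b - 2 * a), sq_nonneg x, mul_pos hapos hbpos,
      mul_pos hs2pos hbpos]
  have heq : Real.sqrt 2 * (1 / a + (1 * a + x * (1 / (2 * a) * (-(2 * x))))) -
      2 * (1 * b + x * (1 / (2 * b) * (-(2 * x)))) =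
      (2 - 2 * x ^ 2) * (Real.sqrt 2 * b - 2 * a) / (a * b) := by
    field_simp
    linear_combination (Real.sqrt 2 * b) * ha2 - (2 * a) * hb2
  rw [heq]
  apply div_pos
  · apply mul_pos (by nlinarith) (by linarith)
  · exact mul_pos hapos hbpos

lemma fAux_pos {x : ℝ} (hx : x ∈ Set.Ioc (0 : ℝ) 1) : 0 < fAux x := by
  have h0 : fAux 0 = 0 := by simp [fAux]
  have := fAux_strictMono (Set.mem_Icc.mpr ⟨le_refl 0, zero_le_one⟩)
    (Set.mem_Icc.mpr ⟨hx.1.le, hx.2⟩) hx.1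
  linarith [h0 ▸ this]

theorem stmt0 : deltaFun 0 = 0 ∧ ∀ r ∈ Set.Ioc (0 : ℝ) 1, 0 < deltaFun r := by
  constructor
  · simp [deltaFun, alphaOf, S]
  · intro r hr
    obtain ⟨hr0, hr1⟩ := hr
    have hr2 : 0 ≤ 1 - r ^ 2 := by nlinarith
    have hr2' : 1 - r ^ 2 < 1 := by nlinarith
    set s := Real.sqrt (1 - r ^ 2) with hs
    have hs0 : 0 ≤ s := Real.sqrt_nonneg _
    have hs0' : s ^ 2 = 1 - r ^ 2 := Real.sq_sqrt hr2
    have hs1 : s < 1 := by nlinarith [Real.sqrt_nonneg (1 - r ^ 2)]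
    have hs2 : s ^ 2 = 1 - r ^ 2 := Real.sq_sqrt hr2
    set a := alphaOf r with haDef
    have ha2 : a ^ 2 = 1 - s := Real.sq_sqrt (by linarith)
    have ha0 : 0 < a := Real.sqrt_pos.mpr (by linarith)
    have ha1 : a ≤ 1 := by nlinarith
    have hNov : (1 : ℝ) - a ^ 2 = s := by linarith
    have h2a : (2 : ℝ) - a ^ 2 = 1 + s := by linarith
    have hr_eq : r = a * Real.sqrt (2 - a ^ 2) := by
      have h : (a * Real.sqrt (2 - a ^ 2)) ^ 2 = r ^ 2 := by
        rw [mul_pow, Real.sq_sqrt (by linarith), ha2]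
        nlinarith
      have hnn : 0 ≤ a * Real.sqrt (2 - a ^ 2) := mul_nonneg ha0.le (Real.sqrt_nonneg _)
      nlinarith
    have hδ : deltaFun r = fAux a / 2 := by
      rw [deltaFun, S, fAux, ← haDef, hr_eq]
      ring
    rw [hδ]
    have := fAux_pos (Set.mem_Ioc.mpr ⟨ha0, ha1⟩)
    linarith
end

section
/- For fixed ξ ∈ ℝ^d with |ξ| = 1, the function (ρ, v, m) ↦ ξᵀ M_{ρ,v,m} ξ, where M_{ρ,v,m} = (m⊗m − ρ(v⊗m + m⊗v) + v⊗v)/(1−ρ²), is convex on (−1,1) × ℝ^d × ℝ^d. -/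
open Set

lemma aux_convex {E : Type*} [AddCommGroup E] [Module ℝ E] {s : Set E}
    (hs : Convex ℝ s) (f g : E → ℝ)
    (hf : ∀ x y : E, ∀ a b : ℝ, a + b = 1 → f (a • x + b • y) = a * f x + b * f y)
    (hg : ∀ x y : E, ∀ a b : ℝ, a + b = 1 → g (a • x + b • y) = a * g x + b * g y)
    (hgpos : ∀ x ∈ s, 0 < g x) :
    ConvexOn ℝ s (fun x => (f x) ^ 2 / g x) := by
  refine ⟨hs, fun x hx y hy a b ha hb hab => ?_⟩
  have hP := hgpos x hx
  have hQ := hgpos y hy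
  dsimp only
  rw [smul_eq_mul, smul_eq_mul, hf x y a b hab, hg x y a b hab]
  set A := f x; set B := f y; set P := g x; set Q := g y
  have hden : 0 < a * P + b * Q := by
    rcases (show 0 < a ∨ a = 0 from ha.lt_or_eq.imp id Eq.symm) with h | h
    · positivity
    · rw [h] at hab ⊢; simp at hab; rw [hab]; simpa using hQ
  have key : (a*A+b*B)^2/(a*P+b*Q) ≤ a*A^2/P + b*B^2/Q := by
    rw [div_add_div _ _ (ne_of_gt hP) (ne_of_gt hQ), div_le_div_iff₀ hden (by positivity)]
    nlinarith [sq_nonneg (A * Q - B * P), mul_nonneg (mul_nonneg ha hb) (sq_nonneg (A * Q - B * P)),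
      mul_pos hP hQ, mul_nonneg ha hb]
  rw [mul_div_assoc, mul_div_assoc] at key
  exact key

theorem stmt6 (d : ℕ) (ξ : EuclideanSpace ℝ (Fin d)) (hξ : ‖ξ‖ = 1) :
    ConvexOn ℝ
      ((Set.Ioo (-1 : ℝ) 1) ×ˢ
        (Set.univ : Set (EuclideanSpace ℝ (Fin d) × EuclideanSpace ℝ (Fin d))))
      (fun p : ℝ × EuclideanSpace ℝ (Fin d) × EuclideanSpace ℝ (Fin d) =>
        ((inner ℝ ξ p.2.2 : ℝ) ^ 2
          - 2 * p.1 * (inner ℝ ξ p.2.1 : ℝ) * (inner ℝ ξ p.2.2 : ℝ)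
          + (inner ℝ ξ p.2.1 : ℝ) ^ 2) / (1 - p.1 ^ 2)) := by
  set s : Set (ℝ × EuclideanSpace ℝ (Fin d) × EuclideanSpace ℝ (Fin d)) :=
    (Set.Ioo (-1 : ℝ) 1) ×ˢ (Set.univ : Set (EuclideanSpace ℝ (Fin d) × EuclideanSpace ℝ (Fin d)))
  have hs : Convex ℝ s := (convex_Ioo _ _).prod convex_univ
  set f₁ : ℝ × EuclideanSpace ℝ (Fin d) × EuclideanSpace ℝ (Fin d) → ℝ :=
    fun p => (inner ℝ ξ p.2.1 : ℝ) + (inner ℝ ξ p.2.2 : ℝ) with hf₁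
  set f₂ : ℝ × EuclideanSpace ℝ (Fin d) × EuclideanSpace ℝ (Fin d) → ℝ :=
    fun p => (inner ℝ ξ p.2.1 : ℝ) - (inner ℝ ξ p.2.2 : ℝ) with hf₂
  set g₁ : ℝ × EuclideanSpace ℝ (Fin d) × EuclideanSpace ℝ (Fin d) → ℝ :=
    fun p => 2 * (1 + p.1) with hg₁
  set g₂ : ℝ × EuclideanSpace ℝ (Fin d) × EuclideanSpace ℝ (Fin d) → ℝ :=
    fun p => 2 * (1 - p.1) with hg₂
  have hflin : ∀ (x y : ℝ × EuclideanSpace ℝ (Fin d) × EuclideanSpace ℝ (Fin d)) (a b : ℝ),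
      a + b = 1 → f₁ (a • x + b • y) = a * f₁ x + b * f₁ y := by
    intro x y a b hab
    simp only [hf₁, Prod.smul_snd, Prod.snd_add, Prod.smul_fst, Prod.fst_add,
      inner_add_right, inner_smul_right]
    ring
  have hflin2 : ∀ (x y : ℝ × EuclideanSpace ℝ (Fin d) × EuclideanSpace ℝ (Fin d)) (a b : ℝ),
      a + b = 1 → f₂ (a • x + b • y) = a * f₂ x + b * f₂ y := by
    intro x y a b hab
    simp only [hf₂, Prod.smul_snd, Prod.snd_add, Prod.smul_fst, Prod.fst_add,
      inner_add_right, inner_smul_right]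
    ring
  have hgaff1 : ∀ (x y : ℝ × EuclideanSpace ℝ (Fin d) × EuclideanSpace ℝ (Fin d)) (a b : ℝ),
      a + b = 1 → g₁ (a • x + b • y) = a * g₁ x + b * g₁ y := by
    intro x y a b hab
    simp only [hg₁, Prod.fst_add, Prod.smul_fst, smul_eq_mul]
    nlinarith
  have hgaff2 : ∀ (x y : ℝ × EuclideanSpace ℝ (Fin d) × EuclideanSpace ℝ (Fin d)) (a b : ℝ),
      a + b = 1 → g₂ (a • x + b • y) = a * g₂ x + b * g₂ y := by
    intro x y a b hab
    simp only [hg₂, Prod.fst_add, Prod.smul_fst, smul_eq_mul]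
    nlinarith
  have hc1 : ConvexOn ℝ s (fun p => (f₁ p) ^ 2 / g₁ p) :=
    aux_convex hs f₁ g₁ hflin hgaff1 (by
      rintro ⟨ρ, v, m⟩ ⟨⟨h1, h2⟩, -⟩
      simp only [hg₁]; linarith)
  have hc2 : ConvexOn ℝ s (fun p => (f₂ p) ^ 2 / g₂ p) :=
    aux_convex hs f₂ g₂ hflin2 hgaff2 (by
      rintro ⟨ρ, v, m⟩ ⟨⟨h1, h2⟩, -⟩
      simp only [hg₂]; linarith)
  refine (hc1.add hc2).congr ?_
  rintro ⟨ρ, v, m⟩ ⟨⟨h1, h2⟩, -⟩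
  simp only [hf₁, hf₂, hg₁, hg₂, Pi.add_apply]
  have hp : (0:ℝ) < 1 + ρ := by linarith
  have hm : (0:ℝ) < 1 - ρ := by linarith
  have hne : (1:ℝ) - ρ ^ 2 ≠ 0 := by nlinarith
  field_simp
  ring
end

section
/- Let K = {(ρ,v,m,e) : |ρ| ≤ 1, m = ρv, |v|² = e} ⊂ ℝ × ℝ^d × ℝ^d × ℝ. If z = (ρ,v,m,e) lies in the closed convex hull of K and the first component of v vanishes (v₁ = 0), then m₁² ≤ e(1 − ρ²). -/
/-- The constraint set `K = {(ρ,v,m,e) : |ρ| ≤ 1, m = ρv, |v|² = e}`. -/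
def Kset (d : ℕ) :
    Set (ℝ × EuclideanSpace ℝ (Fin d) × EuclideanSpace ℝ (Fin d) × ℝ) :=
  {p | |p.1| ≤ 1 ∧ p.2.2.1 = p.1 • p.2.1 ∧ ‖p.2.1‖ ^ 2 = p.2.2.2}

theorem stmt8 (d : ℕ) (hd : 0 < d)
    (z : ℝ × EuclideanSpace ℝ (Fin d) × EuclideanSpace ℝ (Fin d) × ℝ)
    (hz : z ∈ closure (convexHull ℝ (Kset d)))
    (hv1 : z.2.1 ⟨0, hd⟩ = 0) :
    (z.2.2.1 ⟨0, hd⟩) ^ 2 ≤ z.2.2.2 * (1 - z.1 ^ 2) := by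
  set i : Fin d := ⟨0, hd⟩ with hi
  set S : Set (ℝ × EuclideanSpace ℝ (Fin d) × EuclideanSpace ℝ (Fin d) × ℝ) :=
    {p | ∀ a b l : ℝ, 0 < l →
      4 * l * (a * p.2.2.1 i + b * p.2.1 i) ≤
        a ^ 2 + b ^ 2 + 2 * a * b * p.1 + 4 * l ^ 2 * p.2.2.2} with hS
  have hSclosed : IsClosed S := by
    have : S = ⋂ (a : ℝ) (b : ℝ) (l : ℝ) (_ : 0 < l),
        {p : ℝ × EuclideanSpace ℝ (Fin d) × EuclideanSpace ℝ (Fin d) × ℝ |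
          4 * l * (a * p.2.2.1 i + b * p.2.1 i) ≤
            a ^ 2 + b ^ 2 + 2 * a * b * p.1 + 4 * l ^ 2 * p.2.2.2} := by
      ext p; simp [hS, Set.mem_iInter]
    rw [this]
    refine isClosed_iInter fun a => isClosed_iInter fun b => isClosed_iInter fun l =>
      isClosed_iInter fun _ => isClosed_le ?_ ?_
    · fun_prop
    · fun_prop
  have hSconvex : Convex ℝ S := by
    intro x hx y hy s t hs ht hst
    intro a b l hl
    have h1 := hx a b l hl
    have h2 := hy a b l hl
    simp only [Prod.fst_add, Prod.snd_add, Prod.smul_fst, Prod.smul_snd]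
    have e1 : (s • x.2.2.1 + t • y.2.2.1) i = s * x.2.2.1 i + t * y.2.2.1 i := rfl
    have e2 : (s • x.2.1 + t • y.2.1) i = s * x.2.1 i + t * y.2.1 i := rfl
    rw [e1, e2]
    simp only [smul_eq_mul]
    nlinarith [mul_le_mul_of_nonneg_left h1 hs, mul_le_mul_of_nonneg_left h2 ht]
  have hKS : Kset d ⊆ S := by
    rintro p ⟨hρ, hm, he⟩ a b l hl
    have hρ2 : p.1 ^ 2 ≤ 1 := by
      have := abs_le.1 hρ; nlinarith [this.1, this.2]
    have hmi : p.2.2.1 i = p.1 * p.2.1 i := by rw [hm]; rfl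
    have hvi : (p.2.1 i) ^ 2 ≤ p.2.2.2 := by
      rw [← he]
      have hnorm : ‖p.2.1‖ ^ 2 = ∑ j, (p.2.1 j) ^ 2 := by
        rw [EuclideanSpace.norm_eq]
        rw [Real.sq_sqrt (by positivity)]
        simp [sq_abs]
      rw [hnorm]
      exact Finset.single_le_sum (f := fun j => (p.2.1 j) ^ 2)
        (fun j _ => sq_nonneg _) (Finset.mem_univ i)
    rw [hmi]
    nlinarith [sq_nonneg (a * p.1 + b - 2 * l * p.2.1 i),
      mul_le_mul_of_nonneg_left hρ2 (sq_nonneg a), sq_nonneg a, hl.le,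
      mul_le_mul_of_nonneg_left hvi (by positivity : (0:ℝ) ≤ 4 * l ^ 2)]
  have hzS : z ∈ S := closure_minimal (convexHull_min hKS hSconvex) hSclosed hz
  -- specialize to get ∀ t, 0 ≤ (1 - ρ²) t² - 2 m₁ t + e
  have key : ∀ t : ℝ, 0 ≤ (1 - z.1 ^ 2) * (t * t) + (-(2 * z.2.2.1 i)) * t + z.2.2.2 := by
    intro t
    have h := hzS (2 * t) (-(2 * t * z.1)) 1 one_pos
    rw [hv1] at h
    nlinarith [h]
  have hdisc := discrim_le_zero key
  rw [discrim] at hdisc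
  nlinarith [hdisc]
end

section
/- Let K₁ = {(ρ,v,m,e) ∈ ℝ × ℝ^d × ℝ^d × ℝ : |ρ| < 1, |m − ρv|² = (e − |v|²)(1 − ρ²)}. For z = (ρ,v,m,e) ∈ K₁, set ẑ = (1, (m−ρv)/(1−ρ²), (v−ρm)/(1−ρ²), |m+v|²/((1−ρ²)(1+ρ)) − e/(1−ρ)). Then z + sẑ ∈ K for both s = 1−ρ and s = −1−ρ, where K = {(ρ,v,m,e) : |ρ| ≤ 1, m = ρv, |v|² = e}. In particular K₁ is contained in the convex hull of K. -/
set_option maxHeartbeats 1000000 in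
theorem stmt9 (d : ℕ) (ρ e : ℝ) (v m : EuclideanSpace ℝ (Fin d))
    (hρ : |ρ| < 1)
    (hK1 : ‖m - ρ • v‖ ^ 2 = (e - ‖v‖ ^ 2) * (1 - ρ ^ 2)) :
    ((ρ, v, m, e) + (1 - ρ) •
        ((1 : ℝ), (1 - ρ ^ 2)⁻¹ • (m - ρ • v), (1 - ρ ^ 2)⁻¹ • (v - ρ • m),
          ‖m + v‖ ^ 2 / ((1 - ρ ^ 2) * (1 + ρ)) - e / (1 - ρ)) ∈ Kset d) ∧
    ((ρ, v, m, e) + (-1 - ρ) •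
        ((1 : ℝ), (1 - ρ ^ 2)⁻¹ • (m - ρ • v), (1 - ρ ^ 2)⁻¹ • (v - ρ • m),
          ‖m + v‖ ^ 2 / ((1 - ρ ^ 2) * (1 + ρ)) - e / (1 - ρ)) ∈ Kset d) ∧
    (ρ, v, m, e) ∈ convexHull ℝ (Kset d) := by
  obtain ⟨hm1, h1⟩ := abs_lt.mp hρ
  have h2 : (1 : ℝ) - ρ ≠ 0 := by linarith
  have h3 : (1 : ℝ) + ρ ≠ 0 := by linarith
  have h4 : (1 : ℝ) - ρ ^ 2 ≠ 0 := by nlinarith [sq_nonneg ρ, sq_abs ρ, abs_nonneg ρ]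
  -- inner product expansions
  have hsub : ‖m - ρ • v‖ ^ 2
      = ‖m‖ ^ 2 - 2 * ρ * inner ℝ m v + ρ ^ 2 * ‖v‖ ^ 2 := by
    rw [norm_sub_sq_real, real_inner_smul_right, norm_smul]
    simp [mul_pow, sq_abs]; ring
  have hadd : ‖m + v‖ ^ 2 = ‖m‖ ^ 2 + 2 * inner ℝ m v + ‖v‖ ^ 2 :=
    norm_add_sq_real m v
  have hvm : ‖v - m‖ ^ 2 = ‖v‖ ^ 2 - 2 * inner ℝ m v + ‖m‖ ^ 2 := by
    rw [norm_sub_sq_real, real_inner_comm]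
  have hK1' : ‖m‖ ^ 2 - 2 * ρ * inner ℝ m v + ρ ^ 2 * ‖v‖ ^ 2
      = (e - ‖v‖ ^ 2) * (1 - ρ ^ 2) := by rw [← hsub]; exact hK1
  set P : ℝ := inner ℝ m v with hPdef
  -- first point
  have hv1 : v + (1 - ρ) • ((1 - ρ ^ 2)⁻¹ • (m - ρ • v)) = (1 + ρ)⁻¹ • (m + v) := by
    match_scalars <;> field_simp <;> ring
  have hm1' : m + (1 - ρ) • ((1 - ρ ^ 2)⁻¹ • (v - ρ • m)) = (1 + ρ)⁻¹ • (m + v) := by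
    match_scalars <;> field_simp <;> ring
  have hp1 : ((ρ, v, m, e) + (1 - ρ) •
        ((1 : ℝ), (1 - ρ ^ 2)⁻¹ • (m - ρ • v), (1 - ρ ^ 2)⁻¹ • (v - ρ • m),
          ‖m + v‖ ^ 2 / ((1 - ρ ^ 2) * (1 + ρ)) - e / (1 - ρ)) ∈ Kset d) := by
    refine ⟨by simp [Prod.smul_def], ?_, ?_⟩
    · show m + (1 - ρ) • ((1 - ρ ^ 2)⁻¹ • (v - ρ • m))
        = (ρ + (1 - ρ) * 1) • (v + (1 - ρ) • ((1 - ρ ^ 2)⁻¹ • (m - ρ • v)))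
      rw [hv1, hm1']
      norm_num
    · show ‖v + (1 - ρ) • ((1 - ρ ^ 2)⁻¹ • (m - ρ • v))‖ ^ 2
        = e + (1 - ρ) * (‖m + v‖ ^ 2 / ((1 - ρ ^ 2) * (1 + ρ)) - e / (1 - ρ))
      rw [hv1, norm_smul, mul_pow, Real.norm_eq_abs, sq_abs]
      field_simp
      ring
  -- second point
  have hv2 : v + (-1 - ρ) • ((1 - ρ ^ 2)⁻¹ • (m - ρ • v)) = (1 - ρ)⁻¹ • (v - m) := by
    match_scalars <;> field_simp <;> ring
  have hm2 : m + (-1 - ρ) • ((1 - ρ ^ 2)⁻¹ • (v - ρ • m)) = -((1 - ρ)⁻¹ • (v - m)) := by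
    match_scalars <;> field_simp <;> ring
  have hp2 : ((ρ, v, m, e) + (-1 - ρ) •
        ((1 : ℝ), (1 - ρ ^ 2)⁻¹ • (m - ρ • v), (1 - ρ ^ 2)⁻¹ • (v - ρ • m),
          ‖m + v‖ ^ 2 / ((1 - ρ ^ 2) * (1 + ρ)) - e / (1 - ρ)) ∈ Kset d) := by
    refine ⟨by simp [Prod.smul_def], ?_, ?_⟩
    · show m + (-1 - ρ) • ((1 - ρ ^ 2)⁻¹ • (v - ρ • m))
        = (ρ + (-1 - ρ) * 1) • (v + (-1 - ρ) • ((1 - ρ ^ 2)⁻¹ • (m - ρ • v)))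
      rw [hv2, hm2]
      norm_num
    · show ‖v + (-1 - ρ) • ((1 - ρ ^ 2)⁻¹ • (m - ρ • v))‖ ^ 2
        = e + (-1 - ρ) * (‖m + v‖ ^ 2 / ((1 - ρ ^ 2) * (1 + ρ)) - e / (1 - ρ))
      rw [hv2, norm_smul, mul_pow, Real.norm_eq_abs, sq_abs, hvm, hadd]
      field_simp
      linear_combination (2 * (1 - ρ ^ 2)) * hK1'
  refine ⟨hp1, hp2, ?_⟩
  have hc : Convex ℝ (convexHull ℝ (Kset d)) := convex_convexHull ℝ _
  have ha : (0:ℝ) ≤ (1 + ρ) / 2 := by linarith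
  have hb : (0:ℝ) ≤ (1 - ρ) / 2 := by linarith
  have hab : (1 + ρ) / 2 + (1 - ρ) / 2 = 1 := by ring
  have hmem := hc (subset_convexHull ℝ _ hp1) (subset_convexHull ℝ _ hp2) ha hb hab
  have hz : (ρ, v, m, e) = ((1 + ρ) / 2) • ((ρ, v, m, e) + (1 - ρ) •
        ((1 : ℝ), (1 - ρ ^ 2)⁻¹ • (m - ρ • v), (1 - ρ ^ 2)⁻¹ • (v - ρ • m),
          ‖m + v‖ ^ 2 / ((1 - ρ ^ 2) * (1 + ρ)) - e / (1 - ρ)))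
      + ((1 - ρ) / 2) • ((ρ, v, m, e) + (-1 - ρ) •
        ((1 : ℝ), (1 - ρ ^ 2)⁻¹ • (m - ρ • v), (1 - ρ ^ 2)⁻¹ • (v - ρ • m),
          ‖m + v‖ ^ 2 / ((1 - ρ ^ 2) * (1 + ρ)) - e / (1 - ρ))) := by
    simp only [Prod.smul_mk, Prod.mk_add_mk, Prod.mk.injEq, smul_eq_mul, smul_add]
    refine ⟨by ring, ?_, ?_, by field_simp; ring⟩
    · match_scalars <;> field_simp <;> ring
    · match_scalars <;> field_simp <;> ring
  rw [hz]
  exact hmem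
end

section
/- Let a > 0, G : ℝ → [0,∞) continuous and even, and let f : [−a,a] → ℝ be Lipschitz with ess inf f' > 0 and f(−a) = −f(a). Let f^o be the inverse of g := (1/2)f^{−1} + (1/2)(f^{−1})_*, where h_*(x) := −h(−x). Then ∫_{−a}^{a} (f^o)'(x)² G(f^o(x)) dx ≤ ∫_{−a}^{a} f'(x)² G(f(x)) dx, with equality (when G > 0 a.e.) if and only if f is odd, i.e. f = f^o. -/
open Set MeasureTheory Topology Filter

lemma auxImageNull {K : NNReal} {u : ℝ → ℝ} {A N : Set ℝ} (h : LipschitzOnWith K u A)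
    (hN : N ⊆ A) (h0 : volume N = 0) : volume (u '' N) = 0 := by
  obtain ⟨g, hg, hgu⟩ := h.extend_real
  have himg : u '' N = g '' N := image_congr (fun x hx => hgu (hN hx))
  rw [himg]
  have h1 := hg.hausdorffMeasure_image_le (d := 1) zero_le_one N
  rw [MeasureTheory.hausdorffMeasure_real] at h1
  simpa [h0] using h1

lemma auxExtract {A : Set ℝ} (hA : MeasurableSet A) {P : ℝ → Prop}
    (h : ∀ᵐ x ∂(volume.restrict A), P x) :
    ∃ s : Set ℝ, MeasurableSet s ∧ s ⊆ A ∧ volume (A \ s) = 0 ∧ ∀ x ∈ s, P x := by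
  have h0 : (volume.restrict A) {x | ¬ P x} = 0 := by
    simpa [MeasureTheory.ae_iff] using h
  set N := toMeasurable (volume.restrict A) {x | ¬ P x} with hNdef
  refine ⟨A \ N, hA.diff (measurableSet_toMeasurable _ _), diff_subset, ?_, ?_⟩
  · have : A \ (A \ N) ⊆ N ∩ A := by
      intro x hx
      simp only [mem_diff, not_and, not_not] at hx
      exact ⟨hx.2 hx.1, hx.1⟩
    refine le_antisymm (le_trans (measure_mono this) ?_) zero_le
    have : volume (N ∩ A) = (volume.restrict A) N := by
      rw [Measure.restrict_apply (measurableSet_toMeasurable _ _)]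
    rw [this, measure_toMeasurable, h0]
  · intro x hx
    by_contra hP
    exact hx.2 (subset_toMeasurable _ _ hP)

lemma auxSetEq {s A : Set ℝ} (hsub : s ⊆ A) (h0 : volume (A \ s) = 0) :
    s =ᵐ[volume] A := by
  rw [Filter.eventuallyEq_set]
  refine MeasureTheory.ae_iff.mpr (measure_mono_null ?_ h0)
  intro x hx
  simp only [mem_setOf_eq] at hx
  by_cases hxs : x ∈ s
  · exact absurd (iff_of_true hxs (hsub hxs)) hx
  · by_cases hxA : x ∈ A
    · exact ⟨hxA, hxs⟩
    · exact absurd (iff_of_false hxs hxA) hx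

lemma auxFTC {u u' : ℝ → ℝ} {p q : ℝ} (hpq : p ≤ q) {K : NNReal}
    (hLip : LipschitzOnWith K u (Icc p q)) (hmono : StrictMonoOn u (Icc p q))
    (hae : ∀ᵐ t ∂(volume.restrict (Icc p q)), HasDerivAt u (u' t) t ∧ 0 ≤ u' t) :
    u q - u p = ∫ t in Icc p q, u' t := by
  obtain ⟨s, hsm, hsub, hnull, hP⟩ := auxExtract measurableSet_Icc hae
  have hseq : s =ᵐ[volume] Icc p q := auxSetEq hsub hnull
  have himg : u '' (Icc p q) = Icc (u p) (u q) := by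
    apply Subset.antisymm
    · rintro _ ⟨x, hx, rfl⟩
      exact ⟨hmono.monotoneOn (left_mem_Icc.2 hpq) hx hx.1,
        hmono.monotoneOn hx (right_mem_Icc.2 hpq) hx.2⟩
    · exact intermediate_value_Icc hpq hLip.continuousOn
  have hvol : volume (u '' s) = ENNReal.ofReal (u q - u p) := by
    have h1 : volume (u '' s) ≤ ENNReal.ofReal (u q - u p) := by
      rw [← Real.volume_Icc, ← himg]
      exact measure_mono (image_mono hsub)
    have h2 : ENNReal.ofReal (u q - u p) ≤ volume (u '' s) := by
      rw [← Real.volume_Icc, ← himg]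
      have hcover : u '' Icc p q ⊆ u '' s ∪ u '' (Icc p q \ s) := by
        rintro _ ⟨x, hx, rfl⟩
        by_cases hxs : x ∈ s
        · exact Or.inl ⟨x, hxs, rfl⟩
        · exact Or.inr ⟨x, ⟨hx, hxs⟩, rfl⟩
      calc volume (u '' Icc p q) ≤ volume (u '' s) + volume (u '' (Icc p q \ s)) :=
            le_trans (measure_mono hcover) (measure_union_le _ _)
        _ = volume (u '' s) := by
            rw [auxImageNull hLip diff_subset hnull, add_zero]
    exact le_antisymm h1 h2
  have hcov := integral_image_eq_integral_abs_deriv_smul hsm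
    (fun t ht => ((hP t ht).1).hasDerivWithinAt) (hmono.injOn.mono hsub) (fun _ => (1:ℝ))
  rw [setIntegral_const] at hcov
  have hle : u p ≤ u q := (hmono.monotoneOn (left_mem_Icc.2 hpq) (right_mem_Icc.2 hpq) hpq)
  calc u q - u p = (volume (u '' s)).toReal • (1:ℝ) := by
        rw [hvol, ENNReal.toReal_ofReal (by linarith)]; simp
    _ = ∫ t in s, |u' t| • (1:ℝ) := hcov
    _ = ∫ t in s, u' t := by
        refine setIntegral_congr_fun hsm (fun t ht => ?_)
        simp [abs_of_nonneg (hP t ht).2]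
    _ = ∫ t in Icc p q, u' t := setIntegral_congr_set hseq

lemma auxCOV {u u' : ℝ → ℝ} {p q b1 b2 : ℝ} (hpq : p ≤ q) {K : NNReal}
    (hLip : LipschitzOnWith K u (Icc p q)) (hmono : StrictMonoOn u (Icc p q))
    (himg : u '' (Icc p q) = Icc b1 b2)
    {F gfun : ℝ → ℝ}
    (hae : ∀ᵐ t ∂(volume.restrict (Icc p q)),
      HasDerivAt u (u' t) t ∧ 0 ≤ u' t ∧ u' t * gfun (u t) = F t) :
    ∫ y in Icc b1 b2, gfun y = ∫ t in Icc p q, F t := by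
  obtain ⟨s, hsm, hsub, hnull, hP⟩ := auxExtract measurableSet_Icc hae
  have hseq : s =ᵐ[volume] Icc p q := auxSetEq hsub hnull
  have himg2 : u '' s =ᵐ[volume] Icc b1 b2 := by
    refine auxSetEq (himg ▸ image_mono hsub) (measure_mono_null ?_
      (auxImageNull hLip diff_subset hnull))
    intro y hy
    obtain ⟨x, hx, rfl⟩ := himg ▸ hy.1
    exact ⟨x, ⟨hx, fun hxs => hy.2 ⟨x, hxs, rfl⟩⟩, rfl⟩
  calc ∫ y in Icc b1 b2, gfun y = ∫ y in u '' s, gfun y := (setIntegral_congr_set himg2).symm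
    _ = ∫ t in s, |u' t| • gfun (u t) := integral_image_eq_integral_abs_deriv_smul hsm
        (fun t ht => ((hP t ht).1).hasDerivWithinAt) (hmono.injOn.mono hsub) gfun
    _ = ∫ t in s, F t := by
        refine setIntegral_congr_fun hsm (fun t ht => ?_)
        have h := hP t ht
        simp [abs_of_nonneg h.2.1, h.2.2]
    _ = ∫ t in Icc p q, F t := setIntegral_congr_set hseq

lemma auxDerivNonneg {u : ℝ → ℝ} {A : Set ℝ} (hmono : MonotoneOn u A) {x d : ℝ}
    (hx : A ∈ 𝓝 x) (hd : HasDerivAt u d x) : 0 ≤ d := by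
  have h1 : Filter.Tendsto (slope u x) (𝓝[A \ {x}] x) (𝓝 d) :=
    hasDerivWithinAt_iff_tendsto_slope.mp (hd.hasDerivWithinAt (s := A))
  have heq : 𝓝[A \ {x}] x = 𝓝[≠] x := by
    rw [nhdsWithin_restrict'' ({x}ᶜ : Set ℝ) (mem_nhdsWithin_of_mem_nhds hx)]
    congr 1
    ext y; simp [mem_diff, and_comm]
  have hne : (𝓝[A \ {x}] x).NeBot := heq ▸ inferInstance
  refine ge_of_tendsto h1 ?_
  filter_upwards [self_mem_nhdsWithin] with y hy
  rw [slope_def_field, div_nonneg_iff]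
  rcases lt_or_gt_of_ne (fun h : y = x => hy.2 h) with h | h
  · exact Or.inr ⟨by simp only [sub_nonpos]; exact hmono hy.1 (mem_of_mem_nhds hx) h.le,
      by linarith⟩
  · exact Or.inl ⟨by simp only [sub_nonneg]; exact hmono (mem_of_mem_nhds hx) hy.1 h.le,
      by linarith⟩


lemma auxHM {p q : ℝ} (hp : 0 < p) (hq : 0 < q) {d : ℝ} (h : d * ((p⁻¹ + q⁻¹)/2) = 1) :
    0 < d ∧ d ≤ (p+q)/2 ∧ (d = (p+q)/2 → p = q) := by
  have hpq : 0 < p * q := mul_pos hp hq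
  have h2 : d * (q + p) = 2 * (p * q) := by
    have : p⁻¹ + q⁻¹ = (q + p) / (p * q) := by field_simp
    rw [this] at h
    field_simp at h
    linarith
  have hd0 : 0 < d := by nlinarith
  refine ⟨hd0, ?_, ?_⟩
  · nlinarith [sq_nonneg (p - q), h2, hp, hq]
  · intro hd
    rw [hd] at h2
    have : (p - q)^2 = 0 := by nlinarith
    have := pow_eq_zero_iff (n := 2) (by norm_num) |>.mp this
    linarith

theorem stmt10 (a : ℝ) (ha : 0 < a)
    (G : ℝ → ℝ) (hGc : Continuous G) (hGnn : ∀ y, 0 ≤ G y) (hGeven : ∀ y, G (-y) = G y)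
    (f finv fo f' fo' : ℝ → ℝ) (c : ℝ) (hc : 0 < c) (Cf : NNReal)
    (hflip : LipschitzOnWith Cf f (Set.Icc (-a) a))
    (hf' : ∀ᵐ x ∂(volume.restrict (Set.Icc (-a) a)),
        HasDerivAt f (f' x) x ∧ c ≤ f' x)
    (hfa : f (-a) = -(f a))
    (hinv1 : ∀ x ∈ Set.Icc (-a) a, finv (f x) = x)
    (hinv2 : ∀ y ∈ Set.Icc (-(f a)) (f a), f (finv y) = y)
    -- `fo` is the inverse of `g = (1/2) f⁻¹ + (1/2) (f⁻¹)_*`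
    (hfo : ∀ x ∈ Set.Icc (-a) a, (finv (fo x) - finv (-(fo x))) / 2 = x)
    (hfomaps : ∀ x ∈ Set.Icc (-a) a, fo x ∈ Set.Icc (-(f a)) (f a))
    (hfo' : ∀ᵐ x ∂(volume.restrict (Set.Icc (-a) a)), HasDerivAt fo (fo' x) x) :
    (∫ x in (-a)..a, (fo' x) ^ 2 * G (fo x)) ≤ (∫ x in (-a)..a, (f' x) ^ 2 * G (f x)) ∧
    ((∀ᵐ y ∂(volume.restrict (Set.Icc (-(f a)) (f a))), 0 < G y) →
      ((∫ x in (-a)..a, (fo' x) ^ 2 * G (fo x)) = (∫ x in (-a)..a, (f' x) ^ 2 * G (f x)) ↔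
        ∀ x ∈ Set.Icc (-a) a, f x = fo x)) := by
  have haa : -a ≤ a := by linarith
  have hmem_a : a ∈ Set.Icc (-a) a := right_mem_Icc.2 haa
  have hmem_na : -a ∈ Set.Icc (-a) a := left_mem_Icc.2 haa
  have hmem_0 : (0:ℝ) ∈ Set.Icc (-a) a := ⟨by linarith, by linarith⟩
  -- continuity and injectivity of f
  have hfc : ContinuousOn f (Set.Icc (-a) a) := hflip.continuousOn
  have hfinj : Set.InjOn f (Set.Icc (-a) a) := fun x hx y hy h => by
    rw [← hinv1 x hx, ← hinv1 y hy, h]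
  -- b := f a > 0
  have hfa0 : f a ≠ 0 := by
    intro h
    have h2 : f (-a) = f a := by rw [hfa, h, neg_zero]
    have := hfinj hmem_na hmem_a h2
    linarith
  have hb0 : 0 < f a := by
    rcases hfomaps 0 hmem_0 with ⟨h1, h2⟩
    rcases lt_or_eq_of_le (le_trans h1 h2) with h | h
    · rcases lt_trichotomy (f a) 0 with h' | h' | h'
      · linarith
      · exact absurd h' hfa0
      · exact h'
    · exfalso; apply hfa0; linarith
  have hbb : -(f a) ≤ f a := by linarith
  have hmem_b : f a ∈ Set.Icc (-(f a)) (f a) := right_mem_Icc.2 hbb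
  have hmem_nb : -(f a) ∈ Set.Icc (-(f a)) (f a) := left_mem_Icc.2 hbb
  have hsymmb : ∀ y ∈ Set.Icc (-(f a)) (f a), -y ∈ Set.Icc (-(f a)) (f a) := by
    intro y hy
    exact ⟨by linarith [hy.2], by linarith [hy.1]⟩
  -- strict monotonicity of f
  have hfmono : StrictMonoOn f (Set.Icc (-a) a) :=
    ContinuousOn.strictMonoOn_of_injOn_Icc haa (by rw [hfa]; linarith) hfc hfinj
  -- image of f
  have hfimg : f '' (Set.Icc (-a) a) = Set.Icc (-(f a)) (f a) := by
    apply Subset.antisymm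
    · rintro _ ⟨x, hx, rfl⟩
      exact ⟨by rw [← hfa]; exact hfmono.monotoneOn hmem_na hx hx.1,
        hfmono.monotoneOn hx hmem_a hx.2⟩
    · have h := intermediate_value_Icc haa hfc
      rw [hfa] at h
      exact h
  have hfmem : ∀ x ∈ Set.Icc (-a) a, f x ∈ Set.Icc (-(f a)) (f a) := by
    intro x hx; rw [← hfimg]; exact mem_image_of_mem f hx
  have hfinvmem : ∀ y ∈ Set.Icc (-(f a)) (f a), finv y ∈ Set.Icc (-a) a := by
    intro y hy
    rw [← hfimg] at hy
    obtain ⟨x, hx, rfl⟩ := hy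
    rw [hinv1 x hx]; exact hx
  have hfinvmono : StrictMonoOn finv (Set.Icc (-(f a)) (f a)) := by
    intro y1 h1 y2 h2 h12
    by_contra hle
    push_neg at hle
    have := hfmono.monotoneOn (hfinvmem y2 h2) (hfinvmem y1 h1) hle
    rw [hinv2 y1 h1, hinv2 y2 h2] at this
    linarith
  -- interior a.e.
  have hIoo_a : ∀ᵐ x ∂(volume.restrict (Set.Icc (-a) a)), x ∈ Set.Ioo (-a) a := by
    filter_upwards [ae_restrict_mem (measurableSet_Icc (a := -a) (b := a)),
      ae_restrict_of_ae (Filter.eventuallyEq_set.mp (Ioo_ae_eq_Icc (μ := volume) (a := -a) (b := a)))]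
      with x h1 h2
    exact h2.mpr h1
  have hIoo_b : ∀ᵐ y ∂(volume.restrict (Set.Icc (-(f a)) (f a))), y ∈ Set.Ioo (-(f a)) (f a) := by
    filter_upwards [ae_restrict_mem (measurableSet_Icc (a := -(f a)) (b := f a)),
      ae_restrict_of_ae (Filter.eventuallyEq_set.mp
        (Ioo_ae_eq_Icc (μ := volume) (a := -(f a)) (b := f a)))] with y h1 h2
    exact h2.mpr h1
  -- upgraded a.e. info for f
  have hf'ae : ∀ᵐ x ∂(volume.restrict (Set.Icc (-a) a)),
      HasDerivAt f (f' x) x ∧ c ≤ f' x ∧ f' x ≤ Cf ∧ x ∈ Set.Ioo (-a) a := by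
    filter_upwards [hf', hIoo_a] with x hx hxo
    have hlip := hx.1.le_of_lipschitzOn (Icc_mem_nhds hxo.1 hxo.2) hflip
    rw [Real.norm_eq_abs] at hlip
    exact ⟨hx.1, hx.2, le_of_abs_le hlip, hxo⟩
  -- f' is a.e. bounded and measurable, hence integrable on subintervals
  have hf'int : ∀ x1 x2 : ℝ, Set.Icc x1 x2 ⊆ Set.Icc (-a) a →
      Integrable f' (volume.restrict (Set.Icc x1 x2)) := by
    intro x1 x2 hsub
    have hae := ae_restrict_of_ae_restrict_of_subset hsub hf'ae
    refine Integrable.mono' (integrable_const (Cf : ℝ)) ?_ ?_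
    · refine ((measurable_deriv f).aestronglyMeasurable (μ := volume.restrict (Set.Icc x1 x2))).congr ?_
      filter_upwards [hae] with x hx
      exact (hx.1.deriv).symm ▸ rfl
    · filter_upwards [hae] with x hx
      rw [Real.norm_eq_abs, abs_of_nonneg (le_trans hc.le hx.2.1)]
      exact hx.2.2.1
  -- expansivity of f
  have hexp : ∀ x1 ∈ Set.Icc (-a) a, ∀ x2 ∈ Set.Icc (-a) a, x1 ≤ x2 →
      c * (x2 - x1) ≤ f x2 - f x1 := by
    intro x1 h1 x2 h2 h12
    have hsub : Set.Icc x1 x2 ⊆ Set.Icc (-a) a := Set.Icc_subset_Icc h1.1 h2.2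
    have hae' : ∀ᵐ t ∂(volume.restrict (Set.Icc x1 x2)), HasDerivAt f (f' t) t ∧ 0 ≤ f' t := by
      filter_upwards [ae_restrict_of_ae_restrict_of_subset hsub hf'ae] with t ht
      exact ⟨ht.1, le_trans hc.le ht.2.1⟩
    have hftc := auxFTC h12 (hflip.mono hsub) (hfmono.mono hsub) hae'
    have hmono' : ∫ t in Set.Icc x1 x2, (fun _ => c) t ≤ ∫ t in Set.Icc x1 x2, f' t := by
      refine integral_mono_ae (integrable_const c) (hf'int x1 x2 hsub) ?_
      filter_upwards [ae_restrict_of_ae_restrict_of_subset hsub hf'ae] with t ht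
      exact ht.2.1
    rw [setIntegral_const, Real.volume_real_Icc_of_le h12, smul_eq_mul,
      mul_comm] at hmono'
    linarith [hftc ▸ hmono']
  -- positivity of Cf
  have hCf0 : (0:ℝ) < Cf := by
    have h1 := hexp (-a) hmem_na a hmem_a haa
    have h2 := hflip.dist_le_mul a hmem_a (-a) hmem_na
    rw [Real.dist_eq, Real.dist_eq] at h2
    rw [hfa] at h1
    have : |f a - f (-a)| ≤ Cf * |a - -a| := by rw [hfa]; simpa [hfa] using h2
    rcases le_or_gt (Cf:ℝ) 0 with h | h
    · exfalso
      have hl : (Cf:ℝ) * |a - -a| ≤ 0 := mul_nonpos_of_nonpos_of_nonneg h (abs_nonneg _)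
      have : |f a - f (-a)| ≤ 0 := le_trans this hl
      rw [hfa] at this
      have : |f a + f a| ≤ 0 := by simpa [sub_neg_eq_add] using this
      have := abs_nonneg (f a + f a)
      nlinarith [abs_nonneg (f a + f a), le_abs_self (f a + f a)]
    · exact h
  -- finv is Lipschitz with constant 1/c
  have hfinvdiff : ∀ y1 ∈ Set.Icc (-(f a)) (f a), ∀ y2 ∈ Set.Icc (-(f a)) (f a), y1 ≤ y2 →
      finv y2 - finv y1 ≤ (y2 - y1)/c := by
    intro y1 h1 y2 h2 h12
    have hm : finv y1 ≤ finv y2 := by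
      rcases h12.lt_or_eq with h | h
      · exact (hfinvmono h1 h2 h).le
      · rw [h]
    have := hexp (finv y1) (hfinvmem y1 h1) (finv y2) (hfinvmem y2 h2) hm
    rw [hinv2 y1 h1, hinv2 y2 h2] at this
    rw [le_div_iff₀ hc]
    nlinarith [this]
  have hfinvlip : LipschitzOnWith (Real.toNNReal c⁻¹) finv (Set.Icc (-(f a)) (f a)) := by
    rw [lipschitzOnWith_iff_dist_le_mul]
    intro y1 h1 y2 h2
    rw [Real.dist_eq, Real.dist_eq, Real.coe_toNNReal _ (by positivity)]
    rcases le_total y1 y2 with h | h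
    · have := hfinvdiff y1 h1 y2 h2 h
      have hm : finv y1 ≤ finv y2 := by
        rcases h.lt_or_eq with h' | h'
        · exact (hfinvmono h1 h2 h').le
        · rw [h']
      rw [abs_of_nonpos (by linarith), abs_of_nonpos (by linarith)]
      rw [div_eq_mul_inv, mul_comm] at this
      linarith
    · have := hfinvdiff y2 h2 y1 h1 h
      have hm : finv y2 ≤ finv y1 := by
        rcases h.lt_or_eq with h' | h'
        · exact (hfinvmono h2 h1 h').le
        · rw [h']
      rw [abs_of_nonneg (by linarith), abs_of_nonneg (by linarith)]
      rw [div_eq_mul_inv, mul_comm] at this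
      linarith
  -- the function g
  set g : ℝ → ℝ := fun y => (finv y - finv (-y)) / 2 with hgdef
  have hfog : ∀ x ∈ Set.Icc (-a) a, g (fo x) = x := by
    intro x hx; rw [hgdef]; exact hfo x hx
  have hgmono : StrictMonoOn g (Set.Icc (-(f a)) (f a)) := by
    intro y1 h1 y2 h2 h12
    have e1 : finv y1 < finv y2 := hfinvmono h1 h2 h12
    have e2 : finv (-y2) < finv (-y1) := hfinvmono (hsymmb y2 h2) (hsymmb y1 h1) (by linarith)
    rw [hgdef]
    simp only
    linarith
  have hg_b : g (f a) = a := by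
    rw [hgdef]
    simp only
    rw [← hfa, hinv1 a hmem_a, hinv1 (-a) hmem_na]
    ring
  have hg_nb : g (-(f a)) = -a := by
    rw [hgdef]
    simp only [neg_neg]
    rw [← hfa, hinv1 a hmem_a, hinv1 (-a) hmem_na]
    ring
  have hgmem : ∀ y ∈ Set.Icc (-(f a)) (f a), g y ∈ Set.Icc (-a) a := by
    intro y hy
    constructor
    · rw [← hg_nb]; exact hgmono.monotoneOn hmem_nb hy hy.1
    · rw [← hg_b]; exact hgmono.monotoneOn hy hmem_b hy.2
  have hgexp : ∀ y1 ∈ Set.Icc (-(f a)) (f a), ∀ y2 ∈ Set.Icc (-(f a)) (f a), y1 ≤ y2 →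
      (y2 - y1)/(2*Cf) ≤ g y2 - g y1 := by
    intro y1 h1 y2 h2 h12
    have hm : finv y1 ≤ finv y2 := by
      rcases h12.lt_or_eq with h' | h'
      · exact (hfinvmono h1 h2 h').le
      · rw [h']
    have hm2 : finv (-y2) ≤ finv (-y1) := by
      rcases h12.lt_or_eq with h' | h'
      · exact (hfinvmono (hsymmb y2 h2) (hsymmb y1 h1) (by linarith)).le
      · rw [h']
    have hL := hflip.dist_le_mul (finv y2) (hfinvmem y2 h2) (finv y1) (hfinvmem y1 h1)
    rw [Real.dist_eq, Real.dist_eq, hinv2 y1 h1, hinv2 y2 h2,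
      abs_of_nonneg (by linarith), abs_of_nonneg (by linarith)] at hL
    have hfv : (y2 - y1)/Cf ≤ finv y2 - finv y1 := by
      rw [div_le_iff₀ hCf0, mul_comm]
      exact hL
    rw [hgdef]
    simp only
    have : (y2 - y1)/(2*Cf) = ((y2 - y1)/Cf)/2 := by
      rw [div_div, mul_comm]
    rw [this]
    linarith
  have hglip : LipschitzOnWith (Real.toNNReal c⁻¹) g (Set.Icc (-(f a)) (f a)) := by
    rw [lipschitzOnWith_iff_dist_le_mul]
    intro y1 h1 y2 h2
    have d1 := hfinvlip.dist_le_mul y1 h1 y2 h2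
    have d2 := hfinvlip.dist_le_mul (-y1) (hsymmb y1 h1) (-y2) (hsymmb y2 h2)
    rw [Real.dist_eq, Real.dist_eq] at d1 d2 ⊢
    rw [Real.coe_toNNReal _ (by positivity)] at d1 d2 ⊢
    have hnn : |-y1 - -y2| = |y1 - y2| := by
      rw [show -y1 - -y2 = -(y1 - y2) by ring, abs_neg]
    rw [hnn] at d2
    have : g y1 - g y2 = ((finv y1 - finv y2) - (finv (-y1) - finv (-y2)))/2 := by
      rw [hgdef]; ring
    rw [this]
    calc |((finv y1 - finv y2) - (finv (-y1) - finv (-y2)))/2|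
        ≤ (|finv y1 - finv y2| + |finv (-y1) - finv (-y2)|)/2 := by
          rw [abs_div, abs_two]
          linarith [abs_sub (finv y1 - finv y2) (finv (-y1) - finv (-y2))]
      _ ≤ c⁻¹ * |y1 - y2| := by linarith
  -- endpoints of fo
  have hfoendA : fo a = f a := by
    have hPQ := hfo a hmem_a
    have hP : finv (fo a) ≤ a := (hfinvmem _ (hfomaps a hmem_a)).2
    have hQ : -a ≤ finv (-(fo a)) := (hfinvmem _ (hsymmb _ (hfomaps a hmem_a))).1
    have hPa : finv (fo a) = a := by linarith
    have : finv (fo a) = finv (f a) := by rw [hPa, hinv1 a hmem_a]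
    exact hfinvmono.injOn (hfomaps a hmem_a) hmem_b this
  have hfoendNA : fo (-a) = -(f a) := by
    have hPQ := hfo (-a) hmem_na
    have hP : -a ≤ finv (fo (-a)) := (hfinvmem _ (hfomaps (-a) hmem_na)).1
    have hQ : finv (-(fo (-a))) ≤ a := (hfinvmem _ (hsymmb _ (hfomaps (-a) hmem_na))).2
    have hPa : finv (fo (-a)) = -a := by linarith
    have : finv (fo (-a)) = finv (-(f a)) := by
      rw [hPa, ← hfa, hinv1 (-a) hmem_na]
    exact hfinvmono.injOn (hfomaps (-a) hmem_na) hmem_nb this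
  -- fo is Lipschitz
  have hfolip : LipschitzOnWith (2*Cf) fo (Set.Icc (-a) a) := by
    rw [lipschitzOnWith_iff_dist_le_mul]
    intro x1 h1 x2 h2
    rw [Real.dist_eq, Real.dist_eq]
    have key : ∀ z1 ∈ Set.Icc (-a) a, ∀ z2 ∈ Set.Icc (-a) a, fo z1 ≤ fo z2 →
        fo z2 - fo z1 ≤ (2*Cf) * |z1 - z2| := by
      intro z1 hz1 z2 hz2 hle
      have := hgexp (fo z1) (hfomaps z1 hz1) (fo z2) (hfomaps z2 hz2) hle
      rw [hfog z1 hz1, hfog z2 hz2] at this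
      rw [div_le_iff₀ (by positivity)] at this
      calc fo z2 - fo z1 ≤ (z2 - z1) * (2*Cf) := this
        _ ≤ |z1 - z2| * (2*Cf) := by
            have h4 : z2 - z1 ≤ |z1 - z2| := by
              rw [abs_sub_comm]; exact le_abs_self _
            have h5 : (0:ℝ) ≤ 2*(Cf:ℝ) := by positivity
            exact mul_le_mul_of_nonneg_right h4 h5
        _ = (2*Cf) * |z1 - z2| := by ring
    rcases le_total (fo x1) (fo x2) with h | h
    · have h3 := key x1 h1 x2 h2 h
      rw [abs_of_nonpos (by linarith : fo x1 - fo x2 ≤ 0)]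
      push_cast at h3 ⊢
      linarith
    · have h3 := key x2 h2 x1 h1 h
      rw [abs_sub_comm x2 x1] at h3
      rw [abs_of_nonneg (by linarith : (0:ℝ) ≤ fo x1 - fo x2)]
      push_cast at h3 ⊢
      linarith
  have hfomono : StrictMonoOn fo (Set.Icc (-a) a) := by
    intro x1 h1 x2 h2 h12
    by_contra hle
    push_neg at hle
    have := hgmono.monotoneOn (hfomaps x2 h2) (hfomaps x1 h1) hle
    rw [hfog x1 h1, hfog x2 h2] at this
    linarith
  have hfoimg : fo '' (Set.Icc (-a) a) = Set.Icc (-(f a)) (f a) := by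
    apply Subset.antisymm
    · rintro _ ⟨x, hx, rfl⟩
      exact hfomaps x hx
    · have h := intermediate_value_Icc haa hfolip.continuousOn
      rw [hfoendA, hfoendNA] at h
      exact h
  have hfogy : ∀ y ∈ Set.Icc (-(f a)) (f a), fo (g y) = y := by
    intro y hy
    rw [← hfoimg] at hy
    obtain ⟨x, hx, rfl⟩ := hy
    rw [hfog x hx]
  -- upgraded a.e. info for fo
  have hfo'ae : ∀ᵐ x ∂(volume.restrict (Set.Icc (-a) a)),
      HasDerivAt fo (fo' x) x ∧ 0 ≤ fo' x ∧ fo' x ≤ 2*Cf ∧ x ∈ Set.Ioo (-a) a := by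
    filter_upwards [hfo', hIoo_a] with x hx hxo
    have hnb : Set.Icc (-a) a ∈ 𝓝 x := Icc_mem_nhds hxo.1 hxo.2
    have hlip := hx.le_of_lipschitzOn hnb hfolip
    rw [Real.norm_eq_abs] at hlip
    refine ⟨hx, auxDerivNonneg hfomono.monotoneOn hnb hx, ?_, hxo⟩
    have := le_of_abs_le hlip
    push_cast at this
    linarith
  -- extract good sets
  obtain ⟨s₀, hs₀m, hs₀sub, hs₀null, hs₀P⟩ := auxExtract measurableSet_Icc hf'ae
  obtain ⟨s₁, hs₁m, hs₁sub, hs₁null, hs₁P⟩ := auxExtract measurableSet_Icc hfo'ae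
  have hnull4 : volume (Set.Icc (-(f a)) (f a) \ Set.Ioo (-(f a)) (f a)) = 0 :=
    (MeasureTheory.ae_eq_set.mp (Ioo_ae_eq_Icc (μ := volume) (a := -(f a)) (b := f a))).2
  have hbad : ∀ᵐ y ∂(volume.restrict (Set.Icc (-(f a)) (f a))),
      y ∈ Set.Ioo (-(f a)) (f a) ∧ finv y ∈ s₀ ∧ finv (-y) ∈ s₀ ∧ g y ∈ s₁ := by
    rw [MeasureTheory.ae_iff, Measure.restrict_apply' measurableSet_Icc]
    have hn1 : volume (f '' (Set.Icc (-a) a \ s₀)) = 0 :=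
      auxImageNull hflip diff_subset hs₀null
    have hn2 : volume ((fun z : ℝ => -z) ⁻¹' (f '' (Set.Icc (-a) a \ s₀))) = 0 := by
      rw [Measure.measure_preimage_neg]
      exact hn1
    have hn3 : volume (fo '' (Set.Icc (-a) a \ s₁)) = 0 :=
      auxImageNull hfolip diff_subset hs₁null
    refine measure_mono_null (fun y hy => ?_)
      (measure_union_null hnull4 (measure_union_null hn1 (measure_union_null hn2 hn3)))
    obtain ⟨hnP, hyIb⟩ := hy
    simp only [mem_setOf_eq] at hnP
    by_cases h1 : y ∈ Set.Ioo (-(f a)) (f a)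
    · by_cases h2 : finv y ∈ s₀
      · by_cases h3 : finv (-y) ∈ s₀
        · by_cases h4 : g y ∈ s₁
          · exact absurd ⟨h1, h2, h3, h4⟩ hnP
          · exact Or.inr (Or.inr (Or.inr ⟨g y, ⟨hgmem y hyIb, h4⟩, hfogy y hyIb⟩))
        · refine Or.inr (Or.inr (Or.inl ?_))
          have hny : -y ∈ Set.Icc (-(f a)) (f a) := hsymmb y hyIb
          exact ⟨finv (-y), ⟨hfinvmem _ hny, h3⟩, hinv2 _ hny⟩
      · exact Or.inr (Or.inl ⟨finv y, ⟨hfinvmem y hyIb, h2⟩, hinv2 y hyIb⟩)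
    · exact Or.inl ⟨hyIb, h1⟩
  -- the key pointwise identity, a.e. in y
  have hkey : ∀ᵐ y ∂(volume.restrict (Set.Icc (-(f a)) (f a))),
      (c ≤ f' (finv y) ∧ f' (finv y) ≤ Cf) ∧ (c ≤ f' (finv (-y)) ∧ f' (finv (-y)) ≤ Cf) ∧
      HasDerivAt finv (f' (finv y))⁻¹ y ∧
      HasDerivAt g (((f' (finv y))⁻¹ + (f' (finv (-y)))⁻¹)/2) y ∧
      fo' (g y) * (((f' (finv y))⁻¹ + (f' (finv (-y)))⁻¹)/2) = 1 ∧
      f' (finv y) = deriv f (finv y) ∧ fo' (g y) = deriv fo (g y) ∧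
      f' (finv (-y)) = deriv f (finv (-y)) := by
    filter_upwards [hbad] with y hy
    obtain ⟨hyo, hys0, hyns0, hygs1⟩ := hy
    obtain ⟨hdf, hcp, hpC, hpo⟩ := hs₀P _ hys0
    obtain ⟨hdfn, hcq, hqC, hqo⟩ := hs₀P _ hyns0
    obtain ⟨hdfo, hfo'nn, hfo'le, hgo⟩ := hs₁P _ hygs1
    have hyno : -y ∈ Set.Ioo (-(f a)) (f a) := ⟨by linarith [hyo.2], by linarith [hyo.1]⟩
    have hIbnhds : Set.Icc (-(f a)) (f a) ∈ 𝓝 y := Icc_mem_nhds hyo.1 hyo.2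
    have hIbnhdsn : Set.Icc (-(f a)) (f a) ∈ 𝓝 (-y) := Icc_mem_nhds hyno.1 hyno.2
    have hfinvcont : ContinuousAt finv y := hfinvlip.continuousOn.continuousAt hIbnhds
    have hfinvcontn : ContinuousAt finv (-y) := hfinvlip.continuousOn.continuousAt hIbnhdsn
    have hev : ∀ᶠ z in 𝓝 y, f (finv z) = z :=
      Filter.eventually_iff_exists_mem.mpr ⟨_, hIbnhds, hinv2⟩
    have hevn : ∀ᶠ z in 𝓝 (-y), f (finv z) = z :=
      Filter.eventually_iff_exists_mem.mpr ⟨_, hIbnhdsn, hinv2⟩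
    have hd1 : HasDerivAt finv (f' (finv y))⁻¹ y :=
      HasDerivAt.of_local_left_inverse hfinvcont hdf (ne_of_gt (lt_of_lt_of_le hc hcp)) hev
    have hd2 : HasDerivAt finv (f' (finv (-y)))⁻¹ (-y) :=
      HasDerivAt.of_local_left_inverse hfinvcontn hdfn (ne_of_gt (lt_of_lt_of_le hc hcq)) hevn
    have hneg : HasDerivAt (fun z : ℝ => -z) (-1 : ℝ) y := (hasDerivAt_id y).neg
    have hd2' : HasDerivAt (fun z => finv (-z)) (-(f' (finv (-y)))⁻¹) y := by
      have h := HasDerivAt.comp y hd2 hneg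
      rw [mul_neg_one] at h
      exact h
    have hdg : HasDerivAt g (((f' (finv y))⁻¹ + (f' (finv (-y)))⁻¹)/2) y := by
      have h2 := (hd1.sub hd2').div_const 2
      have e : ((f' (finv y))⁻¹ - -(f' (finv (-y)))⁻¹)/2
          = ((f' (finv y))⁻¹ + (f' (finv (-y)))⁻¹)/2 := by ring
      rw [e] at h2
      rw [hgdef]
      exact h2
    have hcomp : HasDerivAt (fo ∘ g)
        (fo' (g y) * (((f' (finv y))⁻¹ + (f' (finv (-y)))⁻¹)/2)) y :=
      HasDerivAt.comp y hdfo hdg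
    have hidev : fo ∘ g =ᶠ[𝓝 y] id := by
      refine Filter.eventually_iff_exists_mem.mpr ⟨_, hIbnhds, fun z hz => ?_⟩
      simp only [Function.comp_apply, id_eq]
      exact hfogy z hz
    have hone : HasDerivAt (fo ∘ g) 1 y := (hasDerivAt_id y).congr_of_eventuallyEq hidev
    exact ⟨⟨hcp, hpC⟩, ⟨hcq, hqC⟩, hd1, hdg, hcomp.unique hone, hdf.deriv.symm, hdfo.deriv.symm,
      hdfn.deriv.symm⟩
  -- interval integral to set integral conversion
  have hconv : ∀ h : ℝ → ℝ, (∫ x in (-a)..a, h x) = ∫ x in Set.Icc (-a) a, h x := by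
    intro h
    rw [intervalIntegral.integral_of_le haa, ← integral_Icc_eq_integral_Ioc]
  -- change of variables for f
  have hcov1 : (∫ y in Set.Icc (-(f a)) (f a), f' (finv y) * G y)
      = ∫ x in Set.Icc (-a) a, f' x ^ 2 * G (f x) := by
    refine auxCOV (u' := f') haa hflip hfmono hfimg ?_
    filter_upwards [hf'ae, ae_restrict_mem measurableSet_Icc] with x hx hxI
    refine ⟨hx.1, le_trans hc.le hx.2.1, ?_⟩
    rw [hinv1 x hxI]
    ring
  -- change of variables for fo
  have hcov2 : (∫ y in Set.Icc (-(f a)) (f a), fo' (g y) * G y)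
      = ∫ x in Set.Icc (-a) a, fo' x ^ 2 * G (fo x) := by
    refine auxCOV (u' := fo') haa hfolip hfomono hfoimg ?_
    filter_upwards [hfo'ae, ae_restrict_mem measurableSet_Icc] with x hx hxI
    refine ⟨hx.1, hx.2.1, ?_⟩
    rw [hfog x hxI]
    ring
  -- bound for G
  obtain ⟨MG, hMG⟩ := (isCompact_Icc (a := -(f a)) (b := f a)).exists_bound_of_continuousOn
    hGc.continuousOn
  have hMG0 : 0 ≤ MG := le_trans (norm_nonneg _) (hMG (f a) hmem_b)
  -- measurability
  have hfinv_aem : AEMeasurable finv (volume.restrict (Set.Icc (-(f a)) (f a))) :=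
    hfinvlip.continuousOn.aemeasurable measurableSet_Icc
  have hfinvneg_cont : ContinuousOn (fun y => finv (-y)) (Set.Icc (-(f a)) (f a)) :=
    hfinvlip.continuousOn.comp continuous_neg.continuousOn (fun y hy => hsymmb y hy)
  have hfinvneg_aem : AEMeasurable (fun y => finv (-y))
      (volume.restrict (Set.Icc (-(f a)) (f a))) :=
    hfinvneg_cont.aemeasurable measurableSet_Icc
  have hgcont : ContinuousOn g (Set.Icc (-(f a)) (f a)) := by
    rw [hgdef]
    exact (hfinvlip.continuousOn.sub hfinvneg_cont).div_const 2
  have hg_aem : AEMeasurable g (volume.restrict (Set.Icc (-(f a)) (f a))) :=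
    hgcont.aemeasurable measurableSet_Icc
  -- integrability of the three integrands in y
  have hBint : Integrable (fun y => f' (finv y) * G y)
      (volume.restrict (Set.Icc (-(f a)) (f a))) := by
    refine Integrable.mono' (integrable_const ((Cf:ℝ) * MG)) ?_ ?_
    · refine AEStronglyMeasurable.congr
        (((measurable_deriv f).comp_aemeasurable hfinv_aem).mul
          hGc.measurable.aemeasurable).aestronglyMeasurable ?_
      filter_upwards [hkey] with y hy
      rw [hy.2.2.2.2.2.1]; rfl
    · filter_upwards [hkey, ae_restrict_mem measurableSet_Icc] with y hy hyI
      rw [Real.norm_eq_abs, abs_mul]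
      have h1 : |f' (finv y)| ≤ Cf := abs_le.mpr ⟨by linarith [hy.1.1], hy.1.2⟩
      have h2 : |G y| ≤ MG := by rw [← Real.norm_eq_abs]; exact hMG y hyI
      exact mul_le_mul h1 h2 (abs_nonneg _) hCf0.le
  have hBnint : Integrable (fun y => f' (finv (-y)) * G (-y))
      (volume.restrict (Set.Icc (-(f a)) (f a))) := by
    refine Integrable.mono' (integrable_const ((Cf:ℝ) * MG)) ?_ ?_
    · refine AEStronglyMeasurable.congr
        (((measurable_deriv f).comp_aemeasurable hfinvneg_aem).mul
          (hGc.measurable.comp measurable_neg).aemeasurable).aestronglyMeasurable ?_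
      filter_upwards [hkey] with y hy
      rw [hy.2.2.2.2.2.2.2]; rfl
    · filter_upwards [hkey, ae_restrict_mem measurableSet_Icc] with y hy hyI
      rw [Real.norm_eq_abs, abs_mul]
      have h1 : |f' (finv (-y))| ≤ Cf := abs_le.mpr ⟨by linarith [hy.2.1.1], hy.2.1.2⟩
      have h2 : |G (-y)| ≤ MG := by
        rw [← Real.norm_eq_abs]; exact hMG (-y) (hsymmb y hyI)
      exact mul_le_mul h1 h2 (abs_nonneg _) hCf0.le
  have hAint : Integrable (fun y => fo' (g y) * G y)
      (volume.restrict (Set.Icc (-(f a)) (f a))) := by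
    refine Integrable.mono' (integrable_const ((Cf:ℝ) * MG)) ?_ ?_
    · refine AEStronglyMeasurable.congr
        (((measurable_deriv fo).comp_aemeasurable hg_aem).mul
          hGc.measurable.aemeasurable).aestronglyMeasurable ?_
      filter_upwards [hkey] with y hy
      rw [hy.2.2.2.2.2.2.1]; rfl
    · filter_upwards [hkey, ae_restrict_mem measurableSet_Icc] with y hy hyI
      obtain ⟨⟨hcp, hpC⟩, ⟨hcq, hqC⟩, _, _, hprod, _⟩ := hy
      obtain ⟨hd0, hdle, _⟩ := auxHM (lt_of_lt_of_le hc hcp) (lt_of_lt_of_le hc hcq) hprod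
      rw [Real.norm_eq_abs, abs_mul]
      have h1 : |fo' (g y)| ≤ Cf := by
        rw [abs_of_pos hd0]
        calc fo' (g y) ≤ (f' (finv y) + f' (finv (-y)))/2 := hdle
          _ ≤ Cf := by linarith
      have h2 : |G y| ≤ MG := by rw [← Real.norm_eq_abs]; exact hMG y hyI
      exact mul_le_mul h1 h2 (abs_nonneg _) hCf0.le
  -- symmetry of the f-integral
  have hsym : (∫ y in Set.Icc (-(f a)) (f a), f' (finv (-y)) * G (-y))
      = ∫ y in Set.Icc (-(f a)) (f a), f' (finv y) * G y := by
    rw [integral_Icc_eq_integral_Ioc, integral_Icc_eq_integral_Ioc,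
      ← intervalIntegral.integral_of_le hbb, ← intervalIntegral.integral_of_le hbb]
    have h := intervalIntegral.integral_comp_neg (a := -(f a)) (b := f a)
      (f := fun y => f' (finv y) * G y)
    simpa using h
  -- pointwise inequality
  have hptle : ∀ᵐ y ∂(volume.restrict (Set.Icc (-(f a)) (f a))),
      fo' (g y) * G y ≤ (f' (finv y) * G y + f' (finv (-y)) * G (-y))/2 := by
    filter_upwards [hkey] with y hy
    obtain ⟨⟨hcp, hpC⟩, ⟨hcq, hqC⟩, _, _, hprod, _⟩ := hy
    obtain ⟨hd0, hdle, _⟩ := auxHM (lt_of_lt_of_le hc hcp) (lt_of_lt_of_le hc hcq) hprod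
    rw [hGeven y]
    calc fo' (g y) * G y ≤ ((f' (finv y) + f' (finv (-y)))/2) * G y :=
          mul_le_mul_of_nonneg_right hdle (hGnn y)
      _ = (f' (finv y) * G y + f' (finv (-y)) * G y)/2 := by ring
  have havg : (∫ y in Set.Icc (-(f a)) (f a), (f' (finv y) * G y + f' (finv (-y)) * G (-y))/2)
      = ∫ y in Set.Icc (-(f a)) (f a), f' (finv y) * G y := by
    rw [integral_div, integral_add hBint hBnint, hsym]
    ring
  have hIle : (∫ y in Set.Icc (-(f a)) (f a), fo' (g y) * G y)
      ≤ ∫ y in Set.Icc (-(f a)) (f a), f' (finv y) * G y := by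
    have h1 := integral_mono_ae hAint ((hBint.add hBnint).div_const 2) hptle
    calc (∫ y in Set.Icc (-(f a)) (f a), fo' (g y) * G y)
        ≤ ∫ y in Set.Icc (-(f a)) (f a), (f' (finv y) * G y + f' (finv (-y)) * G (-y))/2 := h1
      _ = _ := havg
  constructor
  · rw [hconv, hconv, ← hcov1, ← hcov2]
    exact hIle
  intro hGpos
  constructor
  · -- equality implies f = fo
    intro hEqInt
    have hEq2 : (∫ y in Set.Icc (-(f a)) (f a), fo' (g y) * G y)
        = ∫ y in Set.Icc (-(f a)) (f a), f' (finv y) * G y := by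
      calc (∫ y in Set.Icc (-(f a)) (f a), fo' (g y) * G y)
          = ∫ x in Set.Icc (-a) a, fo' x ^ 2 * G (fo x) := hcov2
        _ = ∫ x in (-a)..a, fo' x ^ 2 * G (fo x) := (hconv _).symm
        _ = ∫ x in (-a)..a, f' x ^ 2 * G (f x) := hEqInt
        _ = ∫ x in Set.Icc (-a) a, f' x ^ 2 * G (f x) := hconv _
        _ = _ := hcov1.symm
    have hDint : Integrable
        (fun y => (f' (finv y) * G y + f' (finv (-y)) * G (-y))/2 - fo' (g y) * G y)
        (volume.restrict (Set.Icc (-(f a)) (f a))) :=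
      ((hBint.add hBnint).div_const 2).sub hAint
    have hDnn : 0 ≤ᵐ[volume.restrict (Set.Icc (-(f a)) (f a))]
        (fun y => (f' (finv y) * G y + f' (finv (-y)) * G (-y))/2 - fo' (g y) * G y) := by
      filter_upwards [hptle] with y hy
      simp only [Pi.zero_apply]
      linarith
    have hDzero : (∫ y in Set.Icc (-(f a)) (f a),
        ((f' (finv y) * G y + f' (finv (-y)) * G (-y))/2 - fo' (g y) * G y)) = 0 := by
      have hD2int : Integrable (fun y => (f' (finv y) * G y + f' (finv (-y)) * G (-y))/2)
          (volume.restrict (Set.Icc (-(f a)) (f a))) := (hBint.add hBnint).div_const 2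
      rw [integral_sub hD2int hAint, havg, hEq2, sub_self]
    have hDae := (integral_eq_zero_iff_of_nonneg_ae hDnn hDint).mp hDzero
    rw [Filter.EventuallyEq] at hDae
    have hpq : ∀ᵐ y ∂(volume.restrict (Set.Icc (-(f a)) (f a))),
        f' (finv y) = f' (finv (-y)) := by
      filter_upwards [hkey, hDae, hGpos] with y hy hD0 hG0
      obtain ⟨⟨hcp, hpC⟩, ⟨hcq, hqC⟩, _, _, hprod, _⟩ := hy
      obtain ⟨hd0, hdle, heq⟩ := auxHM (lt_of_lt_of_le hc hcp) (lt_of_lt_of_le hc hcq) hprod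
      apply heq
      simp only [Pi.zero_apply] at hD0
      rw [hGeven y] at hD0
      have hfac : ((f' (finv y) + f' (finv (-y)))/2 - fo' (g y)) * G y = 0 := by
        rw [← hD0]; ring
      rcases mul_eq_zero.mp hfac with h | h
      · linarith
      · exact absurd h (ne_of_gt hG0)
    -- FTC for finv and g
    have hFae : ∀ᵐ t ∂(volume.restrict (Set.Icc (-(f a)) (f a))),
        HasDerivAt finv (f' (finv t))⁻¹ t ∧ 0 ≤ (f' (finv t))⁻¹ := by
      filter_upwards [hkey] with t ht
      exact ⟨ht.2.2.1, inv_nonneg.mpr (by linarith [ht.1.1])⟩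
    have hGdae : ∀ᵐ t ∂(volume.restrict (Set.Icc (-(f a)) (f a))),
        HasDerivAt g (((f' (finv t))⁻¹ + (f' (finv (-t)))⁻¹)/2) t ∧
          0 ≤ ((f' (finv t))⁻¹ + (f' (finv (-t)))⁻¹)/2 := by
      filter_upwards [hkey] with t ht
      refine ⟨ht.2.2.2.1, ?_⟩
      have h1 : 0 < f' (finv t) := lt_of_lt_of_le hc ht.1.1
      have h2 : 0 < f' (finv (-t)) := lt_of_lt_of_le hc ht.2.1.1
      positivity
    have hfinveqg : ∀ y ∈ Set.Icc (-(f a)) (f a), finv y = g y := by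
      intro y hy
      have hsubI : Set.Icc (-(f a)) y ⊆ Set.Icc (-(f a)) (f a) := Set.Icc_subset_Icc_right hy.2
      have h1 : finv y - finv (-(f a)) = ∫ t in Set.Icc (-(f a)) y, (f' (finv t))⁻¹ :=
        auxFTC hy.1 (hfinvlip.mono hsubI) (hfinvmono.mono hsubI)
          (ae_restrict_of_ae_restrict_of_subset hsubI hFae)
      have h2 : g y - g (-(f a))
          = ∫ t in Set.Icc (-(f a)) y, (((f' (finv t))⁻¹ + (f' (finv (-t)))⁻¹)/2) :=
        auxFTC hy.1 (hglip.mono hsubI) (hgmono.mono hsubI)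
          (ae_restrict_of_ae_restrict_of_subset hsubI hGdae)
      have h3 : (∫ t in Set.Icc (-(f a)) y, (((f' (finv t))⁻¹ + (f' (finv (-t)))⁻¹)/2))
          = ∫ t in Set.Icc (-(f a)) y, (f' (finv t))⁻¹ := by
        refine integral_congr_ae ?_
        filter_upwards [ae_restrict_of_ae_restrict_of_subset hsubI hpq] with t ht
        rw [← ht]
        ring
      have h4 : finv (-(f a)) = -a := by rw [← hfa, hinv1 (-a) hmem_na]
      rw [h4] at h1
      rw [hg_nb] at h2
      rw [h3] at h2
      linarith
    intro x hx
    have e1 : g (f x) = x := by rw [← hfinveqg (f x) (hfmem x hx)]; exact hinv1 x hx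
    have e2 : g (fo x) = x := hfog x hx
    exact hgmono.injOn (hfmem x hx) (hfomaps x hx) (by rw [e1, e2])
  · -- f = fo implies equality
    intro hEq
    have haeq : ∀ᵐ x ∂(volume.restrict (Set.Icc (-a) a)),
        fo' x ^ 2 * G (fo x) = f' x ^ 2 * G (f x) := by
      filter_upwards [hf'ae, hfo'ae] with x h0 h1
      have hnb : Set.Icc (-a) a ∈ 𝓝 x := Icc_mem_nhds h0.2.2.2.1 h0.2.2.2.2
      have hev : f =ᶠ[𝓝 x] fo := Filter.eventually_iff_exists_mem.mpr ⟨_, hnb, hEq⟩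
      have h2 : HasDerivAt fo (f' x) x := h0.1.congr_of_eventuallyEq hev.symm
      have h3 : fo' x = f' x := h1.1.unique h2
      rw [h3, hEq x (mem_of_mem_nhds hnb)]
    rw [hconv, hconv]
    exact integral_congr_ae haeq
end

section
/- Let a > 0, G : ℝ → ℝ continuous and even, and let f : [−a,a] → ℝ be Lipschitz with ess inf f' > 0 and f(−a) = −f(a). Then the odd rearrangement f^o satisfies ∫_{−a}^{a} G(f^o(x)) dx = ∫_{−a}^{a} G(f(x)) dx, f^o is odd, f^o(a) = f(a), and ess inf f' ≤ ess inf (f^o)' ≤ ess sup (f^o)' ≤ ess sup f'. -/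
open MeasureTheory

open Set Filter in
/-- FTC-type increment bounds for a Lipschitz function with a.e. derivative bounds. -/
lemma lip_incr_bounds (a : ℝ) (f f' : ℝ → ℝ) (Cf : NNReal)
    (hflip : LipschitzOnWith Cf f (Set.Icc (-a) a))
    (hf' : ∀ᵐ x ∂(volume.restrict (Set.Icc (-a) a)), HasDerivAt f (f' x) x)
    (m M : ℝ) (hm0 : 0 ≤ m + Cf) (hM0 : 0 ≤ M + Cf)
    (hmM : ∀ᵐ x ∂(volume.restrict (Set.Icc (-a) a)), m ≤ f' x ∧ f' x ≤ M) :
    ∀ u ∈ Set.Icc (-a) a, ∀ v ∈ Set.Icc (-a) a, u ≤ v →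
      m * (v - u) ≤ f v - f u ∧ f v - f u ≤ M * (v - u) := by
  obtain ⟨F, hF, hFeq⟩ := hflip.extend_real
  set φ : ℝ → ℝ := fun x => F x + Cf * x with hφdef
  have hlipF : ∀ x y : ℝ, |F y - F x| ≤ Cf * |y - x| := by
    intro x y
    have := hF.dist_le_mul y x
    simpa [Real.dist_eq] using this
  have hφmono : Monotone φ := by
    intro x y hxy
    have h1 := hlipF x y
    have h2 := abs_le.1 h1
    rw [abs_of_nonneg (by linarith : (0:ℝ) ≤ y - x)] at h2
    simp only [hφdef]
    linarith [h2.1]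
  set ψ : ℝ → ℝ := fun x => (2 * Cf + 1) * x - φ x with hψdef
  have hψmono : Monotone ψ := by
    intro x y hxy
    have h1 := hlipF x y
    have h2 := abs_le.1 h1
    rw [abs_of_nonneg (by linarith : (0:ℝ) ≤ y - x)] at h2
    simp only [hψdef, hφdef]
    linarith [h2.2]
  have hφcont : Continuous φ := (hF.continuous).add (continuous_const.mul continuous_id)
  have hψcont : Continuous ψ := (continuous_const.mul continuous_id).sub hφcont
  have hφst : ∀ x, hφmono.stieltjesFunction x = φ x := fun x => by
    rw [hφmono.stieltjesFunction_eq]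
    exact hφmono.continuousWithinAt_Ioi_iff_rightLim_eq.mp hφcont.continuousAt.continuousWithinAt
  have hψst : ∀ x, hψmono.stieltjesFunction x = ψ x := fun x => by
    rw [hψmono.stieltjesFunction_eq]
    exact hψmono.continuousWithinAt_Ioi_iff_rightLim_eq.mp hψcont.continuousAt.continuousWithinAt
  set μφ := hφmono.stieltjesFunction.measure with hμφdef
  have hμφIoc : ∀ u v : ℝ, μφ (Set.Ioc u v) = ENNReal.ofReal (φ v - φ u) := by
    intro u v
    rw [hμφdef, StieltjesFunction.measure_Ioc, hφst, hφst]
  have hμψIoc : ∀ u v : ℝ, hψmono.stieltjesFunction.measure (Set.Ioc u v)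
      = ENNReal.ofReal (ψ v - ψ u) := by
    intro u v
    rw [StieltjesFunction.measure_Ioc, hψst, hψst]
  -- μφ + μψ = (2Cf+1) • volume
  have hsum : μφ + hψmono.stieltjesFunction.measure
      = (ENNReal.ofReal (2 * Cf + 1)) • volume := by
    refine Measure.ext_of_Ioc' _ _ (fun u v huv => ?_) (fun u v huv => ?_)
    · simp [hμφIoc, hμψIoc]
    · have h1 : (0:ℝ) ≤ φ v - φ u := by linarith [hφmono huv.le]
      have h2 : (0:ℝ) ≤ ψ v - ψ u := by linarith [hψmono huv.le]
      rw [Measure.add_apply, hμφIoc, hμψIoc, ← ENNReal.ofReal_add h1 h2,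
        Measure.smul_apply, Real.volume_Ioc, smul_eq_mul,
        ← ENNReal.ofReal_mul (by positivity)]
      congr 1
      simp only [hψdef]
      ring
  have hle : μφ ≤ (ENNReal.ofReal (2 * Cf + 1)) • volume := by
    rw [← hsum]; exact Measure.le_add_right le_rfl
  have hac : μφ ≪ volume :=
    (Measure.absolutelyContinuous_of_le hle).trans
      (Measure.absolutelyContinuous_of_le_smul le_rfl)
  have hloc : IsLocallyFiniteMeasure μφ := by infer_instance
  have hwd : volume.withDensity (Measure.rnDeriv μφ volume) = μφ :=
    Measure.withDensity_rnDeriv_eq μφ volume hac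
  -- a.e. identification of rnDeriv on the interior
  have hf'ae : ∀ᵐ x ∂(volume : Measure ℝ), x ∈ Set.Icc (-a) a → HasDerivAt f (f' x) x :=
    (ae_restrict_iff' measurableSet_Icc).mp hf'
  have hmMae : ∀ᵐ x ∂(volume : Measure ℝ), x ∈ Set.Icc (-a) a → (m ≤ f' x ∧ f' x ≤ M) :=
    (ae_restrict_iff' measurableSet_Icc).mp hmM
  have hkey : ∀ᵐ x ∂(volume : Measure ℝ), x ∈ Set.Ioo (-a) a →
      Measure.rnDeriv μφ volume x = ENNReal.ofReal (f' x + Cf) := by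
    filter_upwards [hf'ae, hφmono.ae_hasDerivAt, Measure.rnDeriv_lt_top μφ volume]
      with x hx1 hx2 hx3 hxIoo
    have hIcc : Set.Icc (-a) a ∈ nhds x := Icc_mem_nhds hxIoo.1 hxIoo.2
    have hfF : f =ᶠ[nhds x] F := eventually_of_mem hIcc (fun y hy => hFeq hy)
    have hdF : HasDerivAt F (f' x) x := (hx1 (Set.mem_Icc_of_Ioo hxIoo)).congr_of_eventuallyEq hfF.symm
    have hdφ : HasDerivAt φ (f' x + Cf) x := by
      have h := hdF.add ((hasDerivAt_id x).const_mul (Cf:ℝ))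
      rw [mul_one] at h
      exact h
    have := hx2.unique hdφ
    rw [← this, ENNReal.ofReal_toReal hx3.ne]
  have hne : ∀ᵐ x ∂(volume : Measure ℝ), x ≠ a := by
    have : (volume : Measure ℝ) {a} = 0 := measure_singleton a
    simpa [ae_iff] using this
  intro u hu v hv huv
  have h1 : μφ (Set.Ioc u v) = ∫⁻ x in Set.Ioc u v, Measure.rnDeriv μφ volume x ∂volume := by
    conv_lhs => rw [← hwd]
    rw [withDensity_apply _ measurableSet_Ioc]
  have hbound : ∀ᵐ x ∂(volume.restrict (Set.Ioc u v)),
      ENNReal.ofReal (m + Cf) ≤ Measure.rnDeriv μφ volume x ∧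
      Measure.rnDeriv μφ volume x ≤ ENNReal.ofReal (M + Cf) := by
    filter_upwards [ae_restrict_mem measurableSet_Ioc, ae_restrict_of_ae hkey,
      ae_restrict_of_ae hmMae, ae_restrict_of_ae hne] with x hx hk hm' hna
    have hxIoo : x ∈ Set.Ioo (-a) a :=
      ⟨lt_of_lt_of_le' hx.1 hu.1, lt_of_le_of_ne (hx.2.trans hv.2) hna⟩
    have hxmM := hm' (Set.mem_Icc_of_Ioo hxIoo)
    rw [hk hxIoo]
    exact ⟨ENNReal.ofReal_le_ofReal (by linarith [hxmM.1]),
      ENNReal.ofReal_le_ofReal (by linarith [hxmM.2])⟩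
  have hlow : ENNReal.ofReal (m + Cf) * volume (Set.Ioc u v) ≤ μφ (Set.Ioc u v) := by
    rw [h1, ← setLIntegral_const (Set.Ioc u v) (ENNReal.ofReal (m + Cf))]
    exact lintegral_mono_ae (hbound.mono fun x h => h.1)
  have hup : μφ (Set.Ioc u v) ≤ ENNReal.ofReal (M + Cf) * volume (Set.Ioc u v) := by
    rw [h1, ← setLIntegral_const (Set.Ioc u v) (ENNReal.ofReal (M + Cf))]
    exact lintegral_mono_ae (hbound.mono fun x h => h.2)
  rw [hμφIoc, Real.volume_Ioc, ← ENNReal.ofReal_mul hm0] at hlow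
  rw [hμφIoc, Real.volume_Ioc, ← ENNReal.ofReal_mul hM0] at hup
  have hφd : (0:ℝ) ≤ φ v - φ u := by linarith [hφmono huv]
  have hlow' : (m + Cf) * (v - u) ≤ φ v - φ u :=
    (ENNReal.ofReal_le_ofReal_iff hφd).mp hlow
  have hup' : φ v - φ u ≤ (M + Cf) * (v - u) :=
    (ENNReal.ofReal_le_ofReal_iff (mul_nonneg hM0 (by linarith))).mp hup
  have hfu : f u = F u := hFeq hu
  have hfv : f v = F v := hFeq hv
  have hφuv : φ v - φ u = (f v - f u) + Cf * (v - u) := by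
    simp only [hφdef, hfu, hfv]; ring
  rw [hφuv] at hlow' hup'
  constructor <;> linarith


set_option maxHeartbeats 1000000 in
open Set Filter in
theorem stmt11 (a : ℝ) (ha : 0 < a)
    (G : ℝ → ℝ) (hGc : Continuous G) (hGeven : ∀ y, G (-y) = G y)
    (f finv fo f' fo' : ℝ → ℝ) (Cf : NNReal)
    (hflip : LipschitzOnWith Cf f (Set.Icc (-a) a))
    (hessinf : 0 < essInf f' (volume.restrict (Set.Icc (-a) a)))
    (hf' : ∀ᵐ x ∂(volume.restrict (Set.Icc (-a) a)), HasDerivAt f (f' x) x)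
    (hfa : f (-a) = -(f a))
    (hinv1 : ∀ x ∈ Set.Icc (-a) a, finv (f x) = x)
    (hinv2 : ∀ y ∈ Set.Icc (-(f a)) (f a), f (finv y) = y)
    -- `fo` is the inverse of `g = (1/2) f⁻¹ + (1/2) (f⁻¹)_*`
    (hfo : ∀ x ∈ Set.Icc (-a) a, (finv (fo x) - finv (-(fo x))) / 2 = x)
    (hfomaps : ∀ x ∈ Set.Icc (-a) a, fo x ∈ Set.Icc (-(f a)) (f a))
    (hfo' : ∀ᵐ x ∂(volume.restrict (Set.Icc (-a) a)), HasDerivAt fo (fo' x) x) :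
    (∫ x in (-a)..a, G (fo x)) = (∫ x in (-a)..a, G (f x)) ∧
    (∀ x ∈ Set.Icc (-a) a, fo (-x) = -(fo x)) ∧
    fo a = f a ∧
    essInf f' (volume.restrict (Set.Icc (-a) a))
      ≤ essInf fo' (volume.restrict (Set.Icc (-a) a)) ∧
    essSup fo' (volume.restrict (Set.Icc (-a) a))
      ≤ essSup f' (volume.restrict (Set.Icc (-a) a)) := by
  have haa : -a < a := by linarith
  set μ := volume.restrict (Set.Icc (-a) a) with hμdef
  set m := essInf f' μ with hm_def
  set M := essSup f' μ with hM_def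
  have hμuniv : μ Set.univ = ENNReal.ofReal (a + a) := by
    rw [hμdef, Measure.restrict_apply_univ, Real.volume_Icc]
    norm_num
  have hμne : μ ≠ 0 := by
    intro h
    rw [h] at hμuniv
    simp only [Measure.coe_zero, Pi.zero_apply] at hμuniv
    have := ENNReal.ofReal_pos.2 (by linarith : (0:ℝ) < a + a)
    rw [← hμuniv] at this
    exact lt_irrefl _ this
  haveI hae : (ae μ).NeBot := ae_neBot.2 hμne
  -- a.e. points are interior
  have hIoo : ∀ᵐ x ∂μ, x ∈ Set.Ioo (-a) a := by
    have hne2 : ∀ᵐ x ∂(volume : Measure ℝ), ¬(x = a ∨ x = -a) := by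
      have h0 : (volume : Measure ℝ) ({a} ∪ {-a}) = 0 :=
        le_antisymm (le_trans (measure_union_le _ _) (by simp)) zero_le
      rw [ae_iff]
      convert h0 using 2
      ext x
      simp only [Set.mem_setOf_eq, not_not, Set.mem_union, Set.mem_singleton_iff]
    filter_upwards [ae_restrict_mem measurableSet_Icc, ae_restrict_of_ae hne2] with x hx h2
    push_neg at h2
    exact ⟨lt_of_le_of_ne hx.1 (Ne.symm h2.2), lt_of_le_of_ne hx.2 h2.1⟩
  -- derivative bounded by the Lipschitz constant
  have hbd : ∀ᵐ x ∂μ, |f' x| ≤ (Cf : ℝ) := by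
    filter_upwards [hf', hIoo] with x hd hx
    have hIcc : Set.Icc (-a) a ∈ nhds x := Icc_mem_nhds hx.1 hx.2
    have habs : Tendsto (fun y => |slope f x y|) (nhdsWithin x {x}ᶜ) (nhds |f' x|) :=
      (hasDerivAt_iff_tendsto_slope.mp hd).abs
    refine le_of_tendsto habs ?_
    filter_upwards [nhdsWithin_le_nhds hIcc, self_mem_nhdsWithin] with y hy hyx
    have hyx' : y ≠ x := hyx
    rw [slope_def_field, abs_div]
    rw [div_le_iff₀ (abs_pos.2 (sub_ne_zero.2 hyx'))]
    have hdist := hflip.dist_le_mul y hy x (Set.mem_Icc_of_Ioo hx)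
    rw [Real.dist_eq, Real.dist_eq] at hdist
    exact hdist
  have hbdd_below : IsBoundedUnder (· ≥ ·) (ae μ) f' :=
    ⟨-(Cf : ℝ), Filter.eventually_map.2 (hbd.mono fun x hx => (abs_le.1 hx).1)⟩
  have hbdd_above : IsBoundedUnder (· ≤ ·) (ae μ) f' :=
    ⟨(Cf : ℝ), Filter.eventually_map.2 (hbd.mono fun x hx => (abs_le.1 hx).2)⟩
  have hm_le : ∀ᵐ x ∂μ, m ≤ f' x := ae_essInf_le hbdd_below
  have hM_ge : ∀ᵐ x ∂μ, f' x ≤ M := ae_le_essSup hbdd_above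
  have hm_pos : 0 < m := hessinf
  have hM_pos : 0 < M := by
    obtain ⟨x, hx1, hx2⟩ := (hm_le.and hM_ge).exists
    linarith
  -- increment bounds for f
  have incr : ∀ u ∈ Set.Icc (-a) a, ∀ v ∈ Set.Icc (-a) a, u ≤ v →
      m * (v - u) ≤ f v - f u ∧ f v - f u ≤ M * (v - u) :=
    lip_incr_bounds a f f' Cf hflip hf' m M
      (by have := Cf.coe_nonneg; linarith) (by have := Cf.coe_nonneg; linarith)
      (hm_le.and hM_ge)
  have hsmono : StrictMonoOn f (Set.Icc (-a) a) := by
    intro u hu v hv huv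
    have h := (incr u hu v hv huv.le).1
    nlinarith
  have hfa_pos : 0 < f a := by
    have := hsmono ⟨le_rfl, haa.le⟩ ⟨haa.le, le_rfl⟩ haa
    rw [hfa] at this
    linarith
  have hmemI : ∀ x ∈ Set.Icc (-a) a, f x ∈ Set.Icc (-(f a)) (f a) := by
    intro x hx
    constructor
    · rw [← hfa]
      exact hsmono.monotoneOn ⟨le_rfl, haa.le⟩ hx hx.1
    · exact hsmono.monotoneOn hx ⟨haa.le, le_rfl⟩ hx.2
  have hfinvmem : ∀ y ∈ Set.Icc (-(f a)) (f a), finv y ∈ Set.Icc (-a) a := by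
    intro y hy
    have hcont : ContinuousOn f (Set.Icc (-a) a) := hflip.continuousOn
    have hsub := intermediate_value_Icc haa.le hcont
    rw [hfa] at hsub
    obtain ⟨x, hx, hxy⟩ := hsub hy
    rw [← hxy, hinv1 x hx]
    exact hx
  have hfinv_lt : ∀ s ∈ Set.Icc (-(f a)) (f a), ∀ t ∈ Set.Icc (-(f a)) (f a),
      s < t → finv s < finv t := by
    intro s hs t ht hst
    by_contra h
    push_neg at h
    have := hsmono.monotoneOn (hfinvmem t ht) (hfinvmem s hs) h
    rw [hinv2 s hs, hinv2 t ht] at this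
    linarith
  have hfinv_le : ∀ s ∈ Set.Icc (-(f a)) (f a), ∀ t ∈ Set.Icc (-(f a)) (f a),
      s ≤ t → finv s ≤ finv t := by
    intro s hs t ht hst
    rcases eq_or_lt_of_le hst with rfl | h
    · exact le_rfl
    · exact (hfinv_lt s hs t ht h).le
  have hfinv_incr : ∀ s ∈ Set.Icc (-(f a)) (f a), ∀ t ∈ Set.Icc (-(f a)) (f a), s ≤ t →
      (t - s) / M ≤ finv t - finv s ∧ finv t - finv s ≤ (t - s) / m := by
    intro s hs t ht hst
    have h := incr (finv s) (hfinvmem s hs) (finv t) (hfinvmem t ht) (hfinv_le s hs t ht hst)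
    rw [hinv2 s hs, hinv2 t ht] at h
    constructor
    · rw [div_le_iff₀ hM_pos]
      linarith [h.2]
    · rw [le_div_iff₀ hm_pos]
      linarith [h.1]
  have hfinv_fa : finv (f a) = a := hinv1 a ⟨haa.le, le_rfl⟩
  have hfinv_nfa : finv (-(f a)) = -a := by
    rw [← hfa]; exact hinv1 (-a) ⟨le_rfl, haa.le⟩
  set g : ℝ → ℝ := fun y => (finv y - finv (-y)) / 2 with hgdef
  have hnegJ : ∀ y ∈ Set.Icc (-(f a)) (f a), -y ∈ Set.Icc (-(f a)) (f a) := by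
    intro y hy
    exact ⟨by linarith [hy.2], by linarith [hy.1]⟩
  have hg_incr : ∀ s ∈ Set.Icc (-(f a)) (f a), ∀ t ∈ Set.Icc (-(f a)) (f a), s ≤ t →
      (t - s) / M ≤ g t - g s ∧ g t - g s ≤ (t - s) / m := by
    intro s hs t ht hst
    have h1 := hfinv_incr s hs t ht hst
    have h2 := hfinv_incr (-t) (hnegJ t ht) (-s) (hnegJ s hs) (by linarith)
    have hts : -s - -t = t - s := by ring
    rw [hts] at h2
    have hgt : g t - g s = ((finv t - finv s) + (finv (-s) - finv (-t))) / 2 := by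
      simp only [hgdef]; ring
    rw [hgt]
    constructor <;> [skip; skip] <;>
      [linarith [h1.1, h2.1]; linarith [h1.2, h2.2]]
  have hgsm : StrictMonoOn g (Set.Icc (-(f a)) (f a)) := by
    intro s hs t ht hst
    have := (hg_incr s hs t ht hst.le).1
    have hpos : 0 < (t - s) / M := div_pos (by linarith) hM_pos
    linarith
  have hg_neg : ∀ y, g (-y) = -(g y) := by
    intro y
    simp only [hgdef, neg_neg]
    ring
  have hg_fa : g (f a) = a := by
    simp only [hgdef, hfinv_fa, hfinv_nfa]
    ring
  have hfa_memJ : f a ∈ Set.Icc (-(f a)) (f a) := ⟨by linarith, le_rfl⟩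
  have hginj : ∀ s ∈ Set.Icc (-(f a)) (f a), ∀ t ∈ Set.Icc (-(f a)) (f a),
      g s = g t → s = t := by
    intro s hs t ht hgst
    rcases lt_trichotomy s t with h | h | h
    · exact absurd hgst (ne_of_lt (hgsm hs ht h))
    · exact h
    · exact absurd hgst.symm (ne_of_lt (hgsm ht hs h))
  -- Part 2 : oddness
  have part2 : ∀ x ∈ Set.Icc (-a) a, fo (-x) = -(fo x) := by
    intro x hx
    have hnx : -x ∈ Set.Icc (-a) a := ⟨by linarith [hx.2], by linarith [hx.1]⟩
    refine hginj (fo (-x)) (hfomaps _ hnx) (-(fo x)) (hnegJ _ (hfomaps x hx)) ?_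
    have e1 : g (fo (-x)) = -x := hfo (-x) hnx
    have e2 : g (-(fo x)) = -x := by
      rw [hg_neg]
      have := hfo x hx
      rw [hgdef]
      simp only
      rw [show ((finv (fo x) - finv (-fo x)) / 2 : ℝ) = (finv (fo x) - finv (-(fo x))) / 2 by norm_num]
      rw [this]
    rw [e1, e2]
  -- Part 3
  have part3 : fo a = f a := by
    refine hginj (fo a) (hfomaps a ⟨haa.le, le_rfl⟩) (f a) hfa_memJ ?_
    rw [hg_fa]
    exact hfo a ⟨haa.le, le_rfl⟩
  have hgfo : ∀ x ∈ Set.Icc (-a) a, g (fo x) = x := by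
    intro x hx
    have h := hfo x hx
    simpa only [hgdef] using h
  have hg_nfa : g (-(f a)) = -a := by rw [hg_neg, hg_fa]
  have hg_mem : ∀ t ∈ Set.Icc (-(f a)) (f a), g t ∈ Set.Icc (-a) a := by
    intro t ht
    constructor
    · rw [← hg_nfa]
      exact (hgsm.le_iff_le (hnegJ _ hfa_memJ) ht).mpr ht.1
    · rw [← hg_fa]
      exact (hgsm.le_iff_le ht hfa_memJ).mpr ht.2
  have hfo_incr : ∀ x ∈ Set.Icc (-a) a, ∀ y ∈ Set.Icc (-a) a, x ≤ y →
      m * (y - x) ≤ fo y - fo x ∧ fo y - fo x ≤ M * (y - x) := by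
    intro x hx y hy hxy
    have hle : fo x ≤ fo y := by
      by_contra h
      push_neg at h
      have h2 := hgsm (hfomaps y hy) (hfomaps x hx) h
      rw [hgfo x hx, hgfo y hy] at h2
      linarith
    have h := hg_incr (fo x) (hfomaps x hx) (fo y) (hfomaps y hy) hle
    rw [hgfo x hx, hgfo y hy] at h
    constructor
    · have := (le_div_iff₀ hm_pos).mp h.2
      linarith
    · have := (div_le_iff₀ hM_pos).mp h.1
      linarith
  -- Part 4
  have hfo_bounds : ∀ᵐ x ∂μ, m ≤ fo' x ∧ fo' x ≤ M := by
    filter_upwards [hfo', hIoo] with x hd hx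
    have hT : Tendsto (slope fo x) (nhdsWithin x (Set.Ioi x)) (nhds (fo' x)) :=
      (hasDerivAt_iff_tendsto_slope.mp hd).mono_left
        (nhdsWithin_mono x (fun y hy => Set.mem_compl_singleton_iff.mpr (LT.lt.ne' hy)))
    have hev : ∀ᶠ y in nhdsWithin x (Set.Ioi x), m ≤ slope fo x y ∧ slope fo x y ≤ M := by
      filter_upwards [nhdsWithin_le_nhds (Iio_mem_nhds hx.2), self_mem_nhdsWithin] with y hy1 hy2
      have hlt : x < y := hy2
      have hyI : y ∈ Set.Icc (-a) a := ⟨by linarith [hx.1], le_of_lt hy1⟩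
      have hxI : x ∈ Set.Icc (-a) a := Set.mem_Icc_of_Ioo hx
      have h := hfo_incr x hxI y hyI hlt.le
      rw [slope_def_field]
      constructor
      · rw [le_div_iff₀ (by linarith)]
        linarith [h.1]
      · rw [div_le_iff₀ (by linarith)]
        linarith [h.2]
    exact ⟨ge_of_tendsto hT (hev.mono fun y h => h.1), le_of_tendsto hT (hev.mono fun y h => h.2)⟩
  have part4a : m ≤ essInf fo' μ := by
    have hbdd : IsBoundedUnder (· ≤ ·) (ae μ) fo' :=
      ⟨M, eventually_map.2 (hfo_bounds.mono fun x h => h.2)⟩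
    exact le_liminf_of_le hbdd.isCoboundedUnder_ge (hfo_bounds.mono fun x h => h.1)
  have part4b : essSup fo' μ ≤ M := by
    have hbdd : IsBoundedUnder (· ≥ ·) (ae μ) fo' :=
      ⟨m, eventually_map.2 (hfo_bounds.mono fun x h => h.1)⟩
    exact limsup_le_of_le hbdd.isCoboundedUnder_le (hfo_bounds.mono fun x h => h.2)
  -- Part 1
  have hfo_cont : ContinuousOn fo (Set.Icc (-a) a) := by
    have hL : LipschitzOnWith (Real.toNNReal M) fo (Set.Icc (-a) a) := by
      apply LipschitzOnWith.of_dist_le_mul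
      intro x hx y hy
      rw [Real.dist_eq, Real.dist_eq, Real.coe_toNNReal M hM_pos.le]
      rcases le_total x y with h | h
      · have hh := hfo_incr x hx y hy h
        rw [abs_sub_comm (fo x) (fo y), abs_sub_comm x y]
        rw [abs_of_nonneg (by nlinarith [hh.1, mul_nonneg hm_pos.le (sub_nonneg.mpr h)] :
            (0:ℝ) ≤ fo y - fo x),
          abs_of_nonneg (by linarith : (0:ℝ) ≤ y - x)]
        linarith [hh.2]
      · have hh := hfo_incr y hy x hx h
        rw [abs_of_nonneg (by nlinarith [hh.1, mul_nonneg hm_pos.le (sub_nonneg.mpr h)] :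
            (0:ℝ) ≤ fo x - fo y),
          abs_of_nonneg (by linarith : (0:ℝ) ≤ x - y)]
        linarith [hh.2]
    exact hL.continuousOn
  haveI : IsFiniteMeasure μ := ⟨by rw [hμuniv]; exact ENNReal.ofReal_lt_top⟩
  have hmesf : AEMeasurable (fun x => |f x|) μ :=
    (continuous_abs.comp_continuousOn hflip.continuousOn).aemeasurable measurableSet_Icc
  have hmesfo : AEMeasurable (fun x => |fo x|) μ :=
    (continuous_abs.comp_continuousOn hfo_cont).aemeasurable measurableSet_Icc
  haveI hfin1 : IsFiniteMeasure (Measure.map (fun x => |f x|) μ) := by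
    constructor
    rw [Measure.map_apply_of_aemeasurable hmesf MeasurableSet.univ, Set.preimage_univ]
    exact measure_lt_top μ _
  have hmap : Measure.map (fun x => |f x|) μ = Measure.map (fun x => |fo x|) μ := by
    refine Measure.ext_of_Iic _ _ (fun t => ?_)
    rw [Measure.map_apply_of_aemeasurable hmesf measurableSet_Iic,
        Measure.map_apply_of_aemeasurable hmesfo measurableSet_Iic]
    have hp1 : (fun x => |f x|) ⁻¹' Set.Iic t = {x | |f x| ≤ t} := rfl
    have hp2 : (fun x => |fo x|) ⁻¹' Set.Iic t = {x | |fo x| ≤ t} := rfl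
    rw [hp1, hp2]
    rcases lt_or_ge t 0 with ht | ht
    · have e1 : {x | |f x| ≤ t} = (∅ : Set ℝ) := Set.eq_empty_iff_forall_notMem.mpr
        (fun x hx => by simp only [Set.mem_setOf_eq] at hx; linarith [abs_nonneg (f x)])
      have e2 : {x | |fo x| ≤ t} = (∅ : Set ℝ) := Set.eq_empty_iff_forall_notMem.mpr
        (fun x hx => by simp only [Set.mem_setOf_eq] at hx; linarith [abs_nonneg (fo x)])
      rw [e1, e2]
    rcases le_or_gt (f a) t with ht2 | ht2
    · have e1 : {x | |f x| ≤ t} =ᵐ[μ] (Set.univ : Set ℝ) := by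
        rw [Filter.eventuallyEq_univ]
        filter_upwards [ae_restrict_mem measurableSet_Icc] with x hx
        have hm1 := hmemI x hx
        show |f x| ≤ t
        rw [abs_le]
        exact ⟨by linarith [hm1.1], by linarith [hm1.2]⟩
      have e2 : {x | |fo x| ≤ t} =ᵐ[μ] (Set.univ : Set ℝ) := by
        rw [Filter.eventuallyEq_univ]
        filter_upwards [ae_restrict_mem measurableSet_Icc] with x hx
        have hm1 := hfomaps x hx
        show |fo x| ≤ t
        rw [abs_le]
        exact ⟨by linarith [hm1.1], by linarith [hm1.2]⟩
      rw [measure_congr e1, measure_congr e2]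
    · have htJ : t ∈ Set.Icc (-(f a)) (f a) := ⟨by linarith, ht2.le⟩
      have hntJ : -t ∈ Set.Icc (-(f a)) (f a) := hnegJ t htJ
      have e1 : {x | |f x| ≤ t} =ᵐ[μ] Set.Icc (finv (-t)) (finv t) := by
        rw [Filter.eventuallyEq_set]
        filter_upwards [ae_restrict_mem measurableSet_Icc] with x hx
        simp only [Set.mem_setOf_eq, Set.mem_Icc, abs_le]
        constructor
        · rintro ⟨h1, h2⟩
          constructor
          · have hle : f (finv (-t)) ≤ f x := by rw [hinv2 _ hntJ]; exact h1
            exact (hsmono.le_iff_le (hfinvmem _ hntJ) hx).mp hle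
          · have hle : f x ≤ f (finv t) := by rw [hinv2 _ htJ]; exact h2
            exact (hsmono.le_iff_le hx (hfinvmem _ htJ)).mp hle
        · rintro ⟨h1, h2⟩
          constructor
          · have hle := hsmono.monotoneOn (hfinvmem _ hntJ) hx h1
            rw [hinv2 _ hntJ] at hle
            exact hle
          · have hle := hsmono.monotoneOn hx (hfinvmem _ htJ) h2
            rw [hinv2 _ htJ] at hle
            exact hle
      have e2 : {x | |fo x| ≤ t} =ᵐ[μ] Set.Icc (-(g t)) (g t) := by
        rw [Filter.eventuallyEq_set]
        filter_upwards [ae_restrict_mem measurableSet_Icc] with x hx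
        simp only [Set.mem_setOf_eq, Set.mem_Icc, abs_le]
        have hfoJ := hfomaps x hx
        constructor
        · rintro ⟨h1, h2⟩
          constructor
          · have hle : g (-t) ≤ g (fo x) := (hgsm.le_iff_le hntJ hfoJ).mpr h1
            rw [hgfo x hx, hg_neg] at hle
            exact hle
          · have hle : g (fo x) ≤ g t := (hgsm.le_iff_le hfoJ htJ).mpr h2
            rw [hgfo x hx] at hle
            exact hle
        · rintro ⟨h1, h2⟩
          constructor
          · have hle : g (-t) ≤ g (fo x) := by rw [hg_neg, hgfo x hx]; exact h1
            exact (hgsm.le_iff_le hntJ hfoJ).mp hle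
          · have hle : g (fo x) ≤ g t := by rw [hgfo x hx]; exact h2
            exact (hgsm.le_iff_le hfoJ htJ).mp hle
      rw [measure_congr e1, measure_congr e2]
      have hsub1 : Set.Icc (finv (-t)) (finv t) ⊆ Set.Icc (-a) a := by
        intro z hz
        exact ⟨le_trans (hfinvmem _ hntJ).1 hz.1, le_trans hz.2 (hfinvmem _ htJ).2⟩
      have hgmem := hg_mem t htJ
      have hsub2 : Set.Icc (-(g t)) (g t) ⊆ Set.Icc (-a) a := by
        intro z hz
        exact ⟨le_trans (by linarith [hgmem.2]) hz.1, le_trans hz.2 hgmem.2⟩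
      rw [hμdef, Measure.restrict_apply' measurableSet_Icc,
        Measure.restrict_apply' measurableSet_Icc,
        Set.inter_eq_self_of_subset_left hsub1, Set.inter_eq_self_of_subset_left hsub2,
        Real.volume_Icc, Real.volume_Icc]
      congr 1
      have hgt : g t = (finv t - finv (-t)) / 2 := by simp only [hgdef]
      rw [hgt]
      ring
  have hsm : AEStronglyMeasurable (fun y : ℝ => G |y|) (Measure.map (fun x => |f x|) μ) :=
    (hGc.comp continuous_abs).aestronglyMeasurable
  have hsm2 : AEStronglyMeasurable (fun y : ℝ => G |y|) (Measure.map (fun x => |fo x|) μ) :=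
    (hGc.comp continuous_abs).aestronglyMeasurable
  have hGabs : ∀ z : ℝ, G |z| = G z := by
    intro z
    rcases abs_choice z with h | h
    · rw [h]
    · rw [h, hGeven]
  have key : ∫ x, G (f x) ∂μ = ∫ x, G (fo x) ∂μ := by
    calc ∫ x, G (f x) ∂μ
        = ∫ x, (fun y : ℝ => G |y|) (|f x|) ∂μ := by
          refine integral_congr_ae (ae_of_all _ fun x => ?_)
          simp only [abs_abs]
          rw [hGabs]
      _ = ∫ y, (fun y : ℝ => G |y|) y ∂(Measure.map (fun x => |f x|) μ) :=
          (integral_map hmesf hsm).symm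
      _ = ∫ y, (fun y : ℝ => G |y|) y ∂(Measure.map (fun x => |fo x|) μ) := by rw [hmap]
      _ = ∫ x, (fun y : ℝ => G |y|) (|fo x|) ∂μ := integral_map hmesfo hsm2
      _ = ∫ x, G (fo x) ∂μ := by
          refine integral_congr_ae (ae_of_all _ fun x => ?_)
          simp only [abs_abs]
          rw [hGabs]
  have part1 : (∫ x in (-a)..a, G (fo x)) = (∫ x in (-a)..a, G (f x)) := by
    rw [intervalIntegral.integral_of_le haa.le, intervalIntegral.integral_of_le haa.le,
      ← integral_Icc_eq_integral_Ioc, ← integral_Icc_eq_integral_Ioc]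
    exact key.symm
  exact ⟨part1, part2, part3, part4a, part4b⟩
end

section
/- Let γ > 0 and K_{e≤γ} = {(ρ,v,m,e) : |ρ| ≤ 1, m = ρv, |v|² = e ≤ γ} ⊂ ℝ × ℝ^d × ℝ^d × ℝ with d ≥ 2. If z = (ρ, 0, m, e) satisfies |ρ| < 1, |m|² < e(1−ρ²) and 4|m|²/(1−ρ²)² + e < γ, then z lies in the interior of the convex hull of K_{e≤γ}. -/
open scoped RealInnerProductSpace

lemma exists_unit_orthogonal (d : ℕ) (hd : 2 ≤ d) (a : EuclideanSpace ℝ (Fin d)) :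
    ∃ w : EuclideanSpace ℝ (Fin d), ‖w‖ = 1 ∧ ⟪a, w⟫ = 0 := by
  have hne : ((ℝ ∙ a)ᗮ : Submodule ℝ (EuclideanSpace ℝ (Fin d))) ≠ ⊥ := by
    intro h
    have htop : (ℝ ∙ a) = ⊤ := Submodule.orthogonal_eq_bot_iff.mp h
    have h1 : Module.finrank ℝ (ℝ ∙ a) ≤ 1 := by
      have := finrank_span_le_card (R := ℝ) ({a} : Set (EuclideanSpace ℝ (Fin d)))
      simpa using this
    have h2 : Module.finrank ℝ (⊤ : Submodule ℝ (EuclideanSpace ℝ (Fin d))) = d := by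
      simp [finrank_euclideanSpace]
    rw [htop, h2] at h1
    omega
  obtain ⟨x, hx, hx0⟩ := Submodule.exists_mem_ne_zero_of_ne_bot hne
  refine ⟨‖x‖⁻¹ • x, ?_, ?_⟩
  · rw [norm_smul]; simp [norm_ne_zero_iff.mpr hx0]
  · rw [real_inner_smul_right]
    have := (Submodule.mem_orthogonal _ x).mp hx a (Submodule.mem_span_singleton_self a)
    rw [this, mul_zero]


set_option maxHeartbeats 1000000 in
lemma mem_hull (d : ℕ) (hd : 2 ≤ d) (γ : ℝ) (ρ e : ℝ) (v m : EuclideanSpace ℝ (Fin d))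
    (horth : ∀ a : EuclideanSpace ℝ (Fin d), ∃ w, ‖w‖ = 1 ∧ ⟪a, w⟫ = 0)
    (h1 : |ρ| < 1)
    (hA : ‖v+m‖^2*(1-ρ) + ‖v-m‖^2*(1+ρ) < 2*e*(1-ρ^2))
    (hB : 2*‖v+m‖^2*(1-ρ) + 2*(e-γ)*(1+ρ)^2*(1-ρ) - ‖v+m‖^2*(1-ρ^2) - ‖v-m‖^2*(1+ρ)^2 < 0)
    (hC : 2*‖v-m‖^2*(1+ρ) + 2*(e-γ)*(1-ρ)^2*(1+ρ) - ‖v-m‖^2*(1-ρ^2) - ‖v+m‖^2*(1-ρ)^2 < 0) :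
    (ρ, v, m, e) ∈ convexHull ℝ
      {p : ℝ × EuclideanSpace ℝ (Fin d) × EuclideanSpace ℝ (Fin d) × ℝ |
        |p.1| ≤ 1 ∧ p.2.2.1 = p.1 • p.2.1 ∧ ‖p.2.1‖ ^ 2 = p.2.2.2 ∧ p.2.2.2 ≤ γ} := by
  set K : Set (ℝ × EuclideanSpace ℝ (Fin d) × EuclideanSpace ℝ (Fin d) × ℝ) :=
    {p | |p.1| ≤ 1 ∧ p.2.2.1 = p.1 • p.2.1 ∧ ‖p.2.1‖ ^ 2 = p.2.2.2 ∧ p.2.2.2 ≤ γ} with hK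
  obtain ⟨hm1, hp1⟩ := abs_lt.mp h1
  have h1p : (0:ℝ) < 1 + ρ := by linarith
  have h1m : (0:ℝ) < 1 - ρ := by linarith
  set a : EuclideanSpace ℝ (Fin d) := (1+ρ)⁻¹ • (v+m) with ha
  set b : EuclideanSpace ℝ (Fin d) := (1-ρ)⁻¹ • (v-m) with hb
  have hna : ‖a‖^2 * (1+ρ)^2 = ‖v+m‖^2 := by
    rw [ha, norm_smul, mul_pow, norm_inv, Real.norm_eq_abs, abs_of_pos h1p]
    field_simp
  have hnb : ‖b‖^2 * (1-ρ)^2 = ‖v-m‖^2 := by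
    rw [hb, norm_smul, mul_pow, norm_inv, Real.norm_eq_abs, abs_of_pos h1m]
    field_simp
  set A2 := ‖a‖^2 with hA2
  set B2 := ‖b‖^2 with hB2
  set emin : ℝ := ((1+ρ)/2) * A2 + ((1-ρ)/2) * B2 with hemin
  set t : ℝ := e - emin with htdef
  have ht : 0 < t := by
    rw [← hna, ← hnb] at hA
    rw [htdef, hemin]
    nlinarith [mul_pos h1p h1m]
  have hBγ : A2 + t < γ := by
    rw [← hna, ← hnb] at hB
    rw [htdef, hemin]
    nlinarith [mul_pos (mul_pos h1p h1p) h1m]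
  have hCγ : B2 + t < γ := by
    rw [← hna, ← hnb] at hC
    rw [htdef, hemin]
    nlinarith [mul_pos (mul_pos h1m h1m) h1p]
  set s : ℝ := Real.sqrt t with hs
  have hs2 : s^2 = t := Real.sq_sqrt ht.le
  obtain ⟨w, hw1, hw0⟩ := horth a
  obtain ⟨w', hw'1, hw'0⟩ := horth b
  have hwnorm : ∀ (c : EuclideanSpace ℝ (Fin d)) (u : EuclideanSpace ℝ (Fin d)),
      ‖u‖ = 1 → ⟪c, u⟫ = 0 → ‖c + s • u‖^2 = ‖c‖^2 + t ∧ ‖c - s • u‖^2 = ‖c‖^2 + t := by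
    intro c u hu1 hu0
    have h1 : ⟪c, s • u⟫ = 0 := by rw [real_inner_smul_right, hu0, mul_zero]
    have h2 : ‖s • u‖^2 = t := by
      rw [norm_smul, hu1, mul_one, Real.norm_eq_abs, sq_abs, hs2]
    constructor
    · rw [norm_add_sq_real, h1, h2]; ring
    · rw [norm_sub_sq_real, h1, h2]; ring
  obtain ⟨hap, ham⟩ := hwnorm a w hw1 hw0
  obtain ⟨hbp, hbm⟩ := hwnorm b w' hw'1 hw'0
  have hP1K : ((1:ℝ), a + s • w, a + s • w, ‖a + s • w‖^2) ∈ K :=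
    ⟨by simp, (one_smul ℝ _).symm, rfl, by rw [hap]; exact le_of_lt hBγ⟩
  have hP2K : ((1:ℝ), a - s • w, a - s • w, ‖a - s • w‖^2) ∈ K :=
    ⟨by simp, (one_smul ℝ _).symm, rfl, by rw [ham]; exact le_of_lt hBγ⟩
  have hP3K : ((-1:ℝ), b + s • w', -(b + s • w'), ‖b + s • w'‖^2) ∈ K :=
    ⟨by simp, (neg_one_smul ℝ _).symm, rfl, by rw [hbp]; exact le_of_lt hCγ⟩
  have hP4K : ((-1:ℝ), b - s • w', -(b - s • w'), ‖b - s • w'‖^2) ∈ K :=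
    ⟨by simp, (neg_one_smul ℝ _).symm, rfl, by rw [hbm]; exact le_of_lt hCγ⟩
  have hconv : Convex ℝ (convexHull ℝ K) := convex_convexHull ℝ K
  have hsub := subset_convexHull ℝ K
  have hQp : ((1:ℝ), a, a, A2 + t) ∈ convexHull ℝ K := by
    have h := hconv (hsub hP1K) (hsub hP2K) (by norm_num : (0:ℝ) ≤ 1/2)
      (by norm_num : (0:ℝ) ≤ 1/2) (by norm_num)
    have heq : ((1:ℝ)/2) • ((1:ℝ), a + s • w, a + s • w, ‖a + s • w‖^2)
        + ((1:ℝ)/2) • ((1:ℝ), a - s • w, a - s • w, ‖a - s • w‖^2)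
        = ((1:ℝ), a, a, A2 + t) := by
      simp only [Prod.smul_mk, Prod.mk_add_mk, smul_eq_mul, Prod.mk.injEq]
      refine ⟨by norm_num, by module, by module, ?_⟩
      rw [hap, ham, hA2]; ring
    rw [← heq]; exact h
  have hQm : ((-1:ℝ), b, -b, B2 + t) ∈ convexHull ℝ K := by
    have h := hconv (hsub hP3K) (hsub hP4K) (by norm_num : (0:ℝ) ≤ 1/2)
      (by norm_num : (0:ℝ) ≤ 1/2) (by norm_num)
    have heq : ((1:ℝ)/2) • ((-1:ℝ), b + s • w', -(b + s • w'), ‖b + s • w'‖^2)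
        + ((1:ℝ)/2) • ((-1:ℝ), b - s • w', -(b - s • w'), ‖b - s • w'‖^2)
        = ((-1:ℝ), b, -b, B2 + t) := by
      simp only [Prod.smul_mk, Prod.mk_add_mk, smul_eq_mul, Prod.mk.injEq]
      refine ⟨by norm_num, by module, by module, ?_⟩
      rw [hbp, hbm, hB2]; ring
    rw [← heq]; exact h
  have h := hconv hQp hQm (by linarith : (0:ℝ) ≤ (1+ρ)/2)
    (by linarith : (0:ℝ) ≤ (1-ρ)/2) (by ring)
  have heq : ((1+ρ)/2) • ((1:ℝ), a, a, A2 + t) + ((1-ρ)/2) • ((-1:ℝ), b, -b, B2 + t)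
      = (ρ, v, m, e) := by
    have hsa : ((1+ρ)/2) • a = ((1:ℝ)/2) • (v + m) := by
      rw [ha, smul_smul]; congr 1; field_simp
    have hsb : ((1-ρ)/2) • b = ((1:ℝ)/2) • (v - m) := by
      rw [hb, smul_smul]; congr 1; field_simp
    simp only [Prod.smul_mk, Prod.mk_add_mk, smul_eq_mul, Prod.mk.injEq]
    refine ⟨by ring, ?_, ?_, ?_⟩
    · rw [hsa, hsb]; module
    · rw [smul_neg, hsa, hsb]; module
    · rw [htdef, hemin]; ring
  rw [← heq]; exact h


theorem stmt19 (d : ℕ) (hd : 2 ≤ d) (γ : ℝ) (hγ : 0 < γ)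
    (ρ e : ℝ) (m : EuclideanSpace ℝ (Fin d))
    (hρ : |ρ| < 1) (hme : ‖m‖ ^ 2 < e * (1 - ρ ^ 2))
    (hγ' : 4 * ‖m‖ ^ 2 / (1 - ρ ^ 2) ^ 2 + e < γ) :
    (ρ, (0 : EuclideanSpace ℝ (Fin d)), m, e) ∈
      interior (convexHull ℝ
        {p : ℝ × EuclideanSpace ℝ (Fin d) × EuclideanSpace ℝ (Fin d) × ℝ |
          |p.1| ≤ 1 ∧ p.2.2.1 = p.1 • p.2.1 ∧ ‖p.2.1‖ ^ 2 = p.2.2.2 ∧ p.2.2.2 ≤ γ}) := by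
  obtain ⟨hm1, hp1⟩ := abs_lt.mp hρ
  have h1p : (0:ℝ) < 1 + ρ := by linarith
  have h1m : (0:ℝ) < 1 - ρ := by linarith
  have hq' : (0:ℝ) < 1 - ρ^2 := by nlinarith [mul_pos h1p h1m]
  have hq : (0:ℝ) < (1 - ρ^2)^2 := by positivity
  set U : Set (ℝ × EuclideanSpace ℝ (Fin d) × EuclideanSpace ℝ (Fin d) × ℝ) :=
    {p | |p.1| < 1 ∧
      ‖p.2.1 + p.2.2.1‖^2*(1-p.1) + ‖p.2.1 - p.2.2.1‖^2*(1+p.1) < 2*p.2.2.2*(1-p.1^2) ∧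
      2*‖p.2.1 + p.2.2.1‖^2*(1-p.1) + 2*(p.2.2.2-γ)*(1+p.1)^2*(1-p.1)
        - ‖p.2.1 + p.2.2.1‖^2*(1-p.1^2) - ‖p.2.1 - p.2.2.1‖^2*(1+p.1)^2 < 0 ∧
      2*‖p.2.1 - p.2.2.1‖^2*(1+p.1) + 2*(p.2.2.2-γ)*(1-p.1)^2*(1+p.1)
        - ‖p.2.1 - p.2.2.1‖^2*(1-p.1^2) - ‖p.2.1 + p.2.2.1‖^2*(1-p.1)^2 < 0} with hU
  have hUopen : IsOpen U := by
    have o1 : IsOpen {p : ℝ × EuclideanSpace ℝ (Fin d) × EuclideanSpace ℝ (Fin d) × ℝ |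
        |p.1| < 1} :=
      isOpen_lt (continuous_abs.comp continuous_fst) continuous_const
    have o2 : IsOpen {p : ℝ × EuclideanSpace ℝ (Fin d) × EuclideanSpace ℝ (Fin d) × ℝ |
        ‖p.2.1 + p.2.2.1‖^2*(1-p.1) + ‖p.2.1 - p.2.2.1‖^2*(1+p.1) < 2*p.2.2.2*(1-p.1^2)} :=
      isOpen_lt (by fun_prop) (by fun_prop)
    have o3 : IsOpen {p : ℝ × EuclideanSpace ℝ (Fin d) × EuclideanSpace ℝ (Fin d) × ℝ |
        2*‖p.2.1 + p.2.2.1‖^2*(1-p.1) + 2*(p.2.2.2-γ)*(1+p.1)^2*(1-p.1)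
          - ‖p.2.1 + p.2.2.1‖^2*(1-p.1^2) - ‖p.2.1 - p.2.2.1‖^2*(1+p.1)^2 < 0} :=
      isOpen_lt (by fun_prop) continuous_const
    have o4 : IsOpen {p : ℝ × EuclideanSpace ℝ (Fin d) × EuclideanSpace ℝ (Fin d) × ℝ |
        2*‖p.2.1 - p.2.2.1‖^2*(1+p.1) + 2*(p.2.2.2-γ)*(1-p.1)^2*(1+p.1)
          - ‖p.2.1 - p.2.2.1‖^2*(1-p.1^2) - ‖p.2.1 + p.2.2.1‖^2*(1-p.1)^2 < 0} :=
      isOpen_lt (by fun_prop) continuous_const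
    rw [hU]
    exact o1.inter (o2.inter (o3.inter o4))
  have hUsub : U ⊆ convexHull ℝ
      {p : ℝ × EuclideanSpace ℝ (Fin d) × EuclideanSpace ℝ (Fin d) × ℝ |
        |p.1| ≤ 1 ∧ p.2.2.1 = p.1 • p.2.1 ∧ ‖p.2.1‖ ^ 2 = p.2.2.2 ∧ p.2.2.2 ≤ γ} := by
    rintro ⟨ρ', v', m', e'⟩ ⟨g1, g2, g3, g4⟩
    exact mem_hull d hd γ ρ' e' v' m' (exists_unit_orthogonal d hd) g1 g2 g3 g4
  have hM : (0:ℝ) ≤ ‖m‖^2 := by positivity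
  have hax : 4 * ‖m‖^2 < (γ - e) * (1 - ρ^2)^2 := by
    have := (div_lt_iff₀ hq).mp (by linarith : 4 * ‖m‖^2 / (1 - ρ^2)^2 < γ - e)
    linarith
  have hγe : (0:ℝ) < γ - e := by nlinarith
  have hzU : (ρ, (0 : EuclideanSpace ℝ (Fin d)), m, e) ∈ U := by
    refine ⟨hρ, ?_, ?_, ?_⟩ <;>
      simp only [zero_add, zero_sub, norm_neg]
    · nlinarith
    · nlinarith [mul_pos hγe (by positivity : (0:ℝ) < (1+ρ)^3*(1-ρ)),
        mul_nonneg hM h1p.le]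
    · nlinarith [mul_pos hγe (by positivity : (0:ℝ) < (1-ρ)^3*(1+ρ)),
        mul_nonneg hM h1m.le]
  exact interior_maximal hUsub hUopen hzU
end
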